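/- arXiv:2507.13216 — 6 statements merged into one kernel-verified Lean document; each statement's English description precedes it below -/
import Mathlib

section
/- Let ν ≥ 1. The map v ↦ C_v, where C_v φ = φ∘v is the substitution operator, induces a bijection between the set of tangent-to-identity formal diffeomorphisms in ν variables and the set of tangent-to-identity ℂ-algebra automorphisms of ℂ[[z₁,…,z_ν]]. -/
open MvPowerSeries Finsupp

noncomputable section

/-- Formal power series in ν variables over ℂ. -/
abbrev PS (ν : ℕ) := MvPowerSeries (Fin ν) ℂ

/-- Total degree of a multi-index. -/
def totalDeg {ν : ℕ} (n : Fin ν →₀ ℕ) : ℕ := ∑ i, n i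

/-- The finset of multi-indices of total degree at most `K`. -/
def degLE (ν K : ℕ) : Finset (Fin ν →₀ ℕ) :=
  (Finset.Iic (Finsupp.equivFunOnFinite.symm fun _ => K)).filter fun m => totalDeg m ≤ K

/-- The substitution (composition) operator `C_v : φ ↦ φ ∘ v`, for a ν-tuple `v` of formal
power series without constant term (each of total order ≥ 1): the coefficient of `φ ∘ v`
on a multi-index `n` is the corresponding coefficient of the finite sum
`∑_{|m| ≤ |n|} (coeff m φ) • v₁^{m₁} ⋯ v_ν^{m_ν}`. -/
def Csub {ν : ℕ} (v : Fin ν → PS ν) (φ : PS ν) : PS ν :=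
  fun n => MvPowerSeries.coeff n
    (∑ m ∈ degLE ν (totalDeg n), MvPowerSeries.coeff m φ • ∏ i, v i ^ m i)

/-- A ν-tuple of formal power series is a tangent-to-identity formal diffeomorphism if
`f i = z_i + a_i` with `ord a_i ≥ 2` for each `i`. -/
def TangentToId {ν : ℕ} (f : Fin ν → PS ν) : Prop :=
  ∀ i, 2 ≤ (f i - MvPowerSeries.X i).order

/-- An operator on formal power series is tangent to identity if it increases the total
order by at least one unit: `ord (Θ φ - φ) ≥ ord φ + 1` for all `φ`. -/
def TangentToIdOp {ν : ℕ} (Θ : PS ν → PS ν) : Prop :=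
  ∀ φ : PS ν, φ.order + 1 ≤ (Θ φ - φ).order


lemma degree_eq_totalDeg (n : Fin ν →₀ ℕ) : Finsupp.degree n = totalDeg n :=
  Finset.sum_subset (Finset.subset_univ _) (fun i _ h => Finsupp.notMem_support_iff.mp h)

lemma totalDeg_add (p q : Fin ν →₀ ℕ) : totalDeg (p + q) = totalDeg p + totalDeg q := by
  simp [totalDeg, Finset.sum_add_distrib]

lemma totalDeg_eq_zero {n : Fin ν →₀ ℕ} (h : totalDeg n = 0) : n = 0 := by
  ext i
  have := (Finset.sum_eq_zero_iff.mp h) i (Finset.mem_univ i)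
  simpa using this

lemma apply_le_totalDeg (n : Fin ν →₀ ℕ) (i : Fin ν) : n i ≤ totalDeg n :=
  Finset.single_le_sum (fun _ _ => Nat.zero_le _) (Finset.mem_univ i)

lemma mem_degLE {m : Fin ν →₀ ℕ} {K : ℕ} : m ∈ degLE ν K ↔ totalDeg m ≤ K := by
  constructor
  · intro h; exact (Finset.mem_filter.mp h).2
  · intro h
    refine Finset.mem_filter.mpr ⟨Finset.mem_Iic.mpr ?_, h⟩
    intro i
    simpa using (apply_le_totalDeg m i).trans h

lemma degLE_mono {K K' : ℕ} (h : K ≤ K') : degLE ν K ⊆ degLE ν K' := by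
  intro m hm; exact mem_degLE.mpr ((mem_degLE.mp hm).trans h)

lemma totalDeg_single (i : Fin ν) : totalDeg (Finsupp.single i 1) = 1 := by
  simp [totalDeg, Finsupp.single_apply]

/-- order ≥ d, coefficientwise characterization -/
def OrdGE (φ : PS ν) (d : ℕ) : Prop := ∀ k, totalDeg k < d → MvPowerSeries.coeff k φ = 0

lemma ordGE_iff {φ : PS ν} {d : ℕ} : OrdGE φ d ↔ (d : ℕ∞) ≤ φ.order := by
  constructor
  · intro h
    apply MvPowerSeries.nat_le_order
    intro k hk
    exact h k (by rwa [degree_eq_totalDeg] at hk)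
  · intro h k hk
    apply MvPowerSeries.coeff_of_lt_order
    rw [degree_eq_totalDeg]
    exact lt_of_lt_of_le (by exact_mod_cast hk) h

lemma OrdGE.mono {φ : PS ν} {d e : ℕ} (h : OrdGE φ d) (he : e ≤ d) : OrdGE φ e :=
  fun k hk => h k (lt_of_lt_of_le hk he)

lemma ordGE_zero (d : ℕ) : OrdGE (0 : PS ν) d := fun k _ => by simp

lemma OrdGE.add {φ ψ : PS ν} {d : ℕ} (h1 : OrdGE φ d) (h2 : OrdGE ψ d) : OrdGE (φ + ψ) d :=
  fun k hk => by rw [map_add, h1 k hk, h2 k hk, add_zero]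

lemma OrdGE.neg {φ : PS ν} {d : ℕ} (h : OrdGE φ d) : OrdGE (-φ) d :=
  fun k hk => by rw [map_neg, h k hk, neg_zero]

lemma OrdGE.sub {φ ψ : PS ν} {d : ℕ} (h1 : OrdGE φ d) (h2 : OrdGE ψ d) : OrdGE (φ - ψ) d := by
  rw [sub_eq_add_neg]; exact h1.add h2.neg

lemma OrdGE.mul {φ ψ : PS ν} {d e : ℕ} (h1 : OrdGE φ d) (h2 : OrdGE ψ e) :
    OrdGE (φ * ψ) (d + e) := by
  rw [ordGE_iff] at h1 h2 ⊢
  calc ((d + e : ℕ) : ℕ∞) = (d : ℕ∞) + e := by push_cast; ring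
  _ ≤ φ.order + ψ.order := add_le_add h1 h2
  _ ≤ (φ * ψ).order := MvPowerSeries.le_order_mul

lemma OrdGE.pow {φ : PS ν} {d : ℕ} (h : OrdGE φ d) (k : ℕ) : OrdGE (φ ^ k) (k * d) := by
  induction k with
  | zero => simpa [OrdGE] using fun k hk => absurd hk (by simp)
  | succ k ih =>
    have := h.mul ih
    rw [← pow_succ'] at this
    exact this.mono (by ring_nf; omega)

lemma ordGE_prod {ι : Type*} (s : Finset ι) (f : ι → PS ν) (d : ι → ℕ)
    (h : ∀ i ∈ s, OrdGE (f i) (d i)) : OrdGE (∏ i ∈ s, f i) (∑ i ∈ s, d i) := by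
  induction s using Finset.cons_induction with
  | empty => simpa [OrdGE] using fun k hk => absurd hk (by simp)
  | cons a s ha ih =>
    rw [Finset.prod_cons, Finset.sum_cons]
    exact (h a (Finset.mem_cons_self a s)).mul (ih fun i hi => h i (Finset.mem_cons_of_mem hi))

lemma ordGE_prod_sub {ι : Type*} (s : Finset ι) (f g : ι → PS ν) (d : ι → ℕ)
    (hf : ∀ i ∈ s, OrdGE (f i) (d i)) (hg : ∀ i ∈ s, OrdGE (g i) (d i))
    (hfg : ∀ i ∈ s, OrdGE (f i - g i) (d i + 1)) :
    OrdGE ((∏ i ∈ s, f i) - ∏ i ∈ s, g i) ((∑ i ∈ s, d i) + 1) := by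
  induction s using Finset.cons_induction with
  | empty => simpa using ordGE_zero 1
  | cons a s ha ih =>
    rw [Finset.prod_cons, Finset.prod_cons, Finset.sum_cons]
    have key : f a * ∏ i ∈ s, f i - g a * ∏ i ∈ s, g i
        = f a * ((∏ i ∈ s, f i) - ∏ i ∈ s, g i) + (f a - g a) * ∏ i ∈ s, g i := by ring
    rw [key]
    have h1 : OrdGE (f a * ((∏ i ∈ s, f i) - ∏ i ∈ s, g i)) (d a + ((∑ i ∈ s, d i) + 1)) :=
      (hf a (Finset.mem_cons_self a s)).mul
        (ih (fun i hi => hf i (Finset.mem_cons_of_mem hi))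
            (fun i hi => hg i (Finset.mem_cons_of_mem hi))
            (fun i hi => hfg i (Finset.mem_cons_of_mem hi)))
    have h2 : OrdGE ((f a - g a) * ∏ i ∈ s, g i) ((d a + 1) + ∑ i ∈ s, d i) :=
      (hfg a (Finset.mem_cons_self a s)).mul
        (ordGE_prod s g d (fun i hi => hg i (Finset.mem_cons_of_mem hi)))
    exact (h1.mono (by omega)).add (h2.mono (by omega))

lemma ordGE_pow_sub {φ ψ : PS ν} {e : ℕ} (hf : OrdGE φ e) (hg : OrdGE ψ e)
    (hfg : OrdGE (φ - ψ) (e + 1)) (k : ℕ) : OrdGE (φ ^ k - ψ ^ k) (k * e + 1) := by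
  induction k with
  | zero => simpa using ordGE_zero 1
  | succ k ih =>
    have key : φ ^ (k+1) - ψ ^ (k+1) = φ * (φ ^ k - ψ ^ k) + (φ - ψ) * ψ ^ k := by ring
    rw [key]
    have h1 := hf.mul ih
    have h2 := hfg.mul (hg.pow k)
    exact (h1.mono (by ring_nf; omega)).add (h2.mono (by ring_nf; omega))

section CsubAlg
variable (v : Fin ν → PS ν) (hv : ∀ i, OrdGE (v i) 1)

lemma ordGE_prod_pow (hv : ∀ i, OrdGE (v i) 1) (m : Fin ν →₀ ℕ) :
    OrdGE (∏ i, v i ^ m i) (totalDeg m) := by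
  have := ordGE_prod Finset.univ (fun i => v i ^ m i) (fun i => m i)
    (fun i _ => by simpa using (hv i).pow (m i))
  simpa [totalDeg] using this

lemma coeff_Csub (φ : PS ν) (n : Fin ν →₀ ℕ) :
    MvPowerSeries.coeff n (Csub v φ) =
      MvPowerSeries.coeff n
        (∑ m ∈ degLE ν (totalDeg n), MvPowerSeries.coeff m φ • ∏ i, v i ^ m i) := rfl

/-- truncation polynomial -/
def truncP (K : ℕ) (φ : PS ν) : MvPolynomial (Fin ν) ℂ :=
  ∑ m ∈ degLE ν K, MvPolynomial.monomial m (MvPowerSeries.coeff m φ)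

lemma coeff_truncP (K : ℕ) (φ : PS ν) (m : Fin ν →₀ ℕ) :
    (truncP K φ).coeff m = if totalDeg m ≤ K then MvPowerSeries.coeff m φ else 0 := by
  rw [truncP]
  rw [MvPolynomial.coeff_sum]
  simp only [MvPolynomial.coeff_monomial]
  by_cases h : totalDeg m ≤ K
  · rw [if_pos h, Finset.sum_eq_single m
      (fun b _ hb => if_neg (fun e => hb e)) (fun hm => absurd (mem_degLE.mpr h) hm)]
    simp
  · rw [if_neg h, Finset.sum_eq_zero]
    intro b hb
    rw [if_neg]
    rintro rfl
    exact h (mem_degLE.mp hb)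

lemma aeval_truncP (K : ℕ) (φ : PS ν) :
    MvPolynomial.aeval v (truncP K φ) =
      ∑ m ∈ degLE ν K, MvPowerSeries.coeff m φ • ∏ i, v i ^ m i := by
  rw [truncP, map_sum]
  refine Finset.sum_congr rfl fun m _ => ?_
  rw [MvPolynomial.aeval_monomial, Finsupp.prod_fintype _ _ (fun i => pow_zero _),
    ← Algebra.smul_def]

lemma coeff_Csub_eq_aeval (hv : ∀ i, OrdGE (v i) 1) (φ : PS ν) {n : Fin ν →₀ ℕ} {K : ℕ}
    (hK : totalDeg n ≤ K) :
    MvPowerSeries.coeff n (Csub v φ) =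
      MvPowerSeries.coeff n (MvPolynomial.aeval v (truncP K φ)) := by
  rw [coeff_Csub, aeval_truncP, map_sum, map_sum]
  apply Finset.sum_subset (degLE_mono hK)
  intro m hm hm'
  rw [map_smul, smul_eq_mul, ordGE_prod_pow v hv m n
    (lt_of_not_ge (fun h => hm' (mem_degLE.mpr h))), mul_zero]

lemma coeff_aeval_high (hv : ∀ i, OrdGE (v i) 1) {p : MvPolynomial (Fin ν) ℂ} {K : ℕ}
    (hp : ∀ m, totalDeg m ≤ K → p.coeff m = 0) {n : Fin ν →₀ ℕ} (hn : totalDeg n ≤ K) :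
    MvPowerSeries.coeff n (MvPolynomial.aeval v p) = 0 := by
  conv_lhs => rw [p.as_sum]
  rw [map_sum, map_sum]
  apply Finset.sum_eq_zero
  intro m hm
  rw [MvPolynomial.aeval_monomial, Finsupp.prod_fintype _ _ (fun i => pow_zero _),
    ← Algebra.smul_def, map_smul, smul_eq_mul,
    ordGE_prod_pow v hv m n (lt_of_le_of_lt hn ?_), mul_zero]
  by_contra h
  exact MvPolynomial.mem_support_iff.mp hm (hp m (le_of_not_gt h))

lemma Csub_add (φ ψ : PS ν) : Csub v (φ + ψ) = Csub v φ + Csub v ψ := by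
  ext n
  rw [map_add, coeff_Csub, coeff_Csub, coeff_Csub, ← map_add, ← Finset.sum_add_distrib]
  refine congrArg _ (Finset.sum_congr rfl fun m _ => ?_)
  rw [map_add, add_smul]

lemma Csub_smul (c : ℂ) (φ : PS ν) : Csub v (c • φ) = c • Csub v φ := by
  ext n
  rw [map_smul, coeff_Csub, coeff_Csub, ← map_smul, Finset.smul_sum]
  refine congrArg _ (Finset.sum_congr rfl fun m _ => ?_)
  rw [map_smul, smul_eq_mul, mul_smul]

lemma Csub_zero : Csub v (0 : PS ν) = 0 := by
  ext n; rw [coeff_Csub]; simp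

lemma Csub_one (hv : ∀ i, OrdGE (v i) 1) : Csub v (1 : PS ν) = 1 := by
  ext n
  rw [coeff_Csub_eq_aeval v hv 1 (le_refl (totalDeg n))]
  congr 1
  have : truncP (totalDeg n) (1 : PS ν) = 1 := by
    apply MvPolynomial.ext
    intro m
    rw [coeff_truncP, MvPowerSeries.coeff_one, MvPolynomial.coeff_one]
    by_cases h : m = 0
    · subst h; simp [totalDeg]
    · simp [h, eq_comm]
  rw [this, map_one]

lemma coeff_truncP_mul (K : ℕ) (φ ψ : PS ν) {m : Fin ν →₀ ℕ} (hm : totalDeg m ≤ K) :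
    (truncP K φ * truncP K ψ).coeff m = MvPowerSeries.coeff m (φ * ψ) := by
  rw [MvPolynomial.coeff_mul, MvPowerSeries.coeff_mul]
  refine Finset.sum_congr rfl fun p hp => ?_
  have hpq := Finset.HasAntidiagonal.mem_antidiagonal.mp hp
  have h1 : totalDeg p.1 ≤ K := by
    have := totalDeg_add p.1 p.2; rw [hpq] at this; omega
  have h2 : totalDeg p.2 ≤ K := by
    have := totalDeg_add p.1 p.2; rw [hpq] at this; omega
  rw [coeff_truncP, coeff_truncP, if_pos h1, if_pos h2]

lemma Csub_mul (hv : ∀ i, OrdGE (v i) 1) (φ ψ : PS ν) :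
    Csub v (φ * ψ) = Csub v φ * Csub v ψ := by
  ext n
  set K := totalDeg n with hKdef
  have hK : totalDeg n ≤ K := le_refl _
  rw [coeff_Csub_eq_aeval v hv (φ * ψ) hK]
  have key : MvPowerSeries.coeff n (MvPolynomial.aeval v (truncP K (φ * ψ)))
      = MvPowerSeries.coeff n (MvPolynomial.aeval v (truncP K φ * truncP K ψ)) := by
    have hd : ∀ m, totalDeg m ≤ K →
        (truncP K (φ * ψ) - truncP K φ * truncP K ψ).coeff m = 0 := by
      intro m hm
      rw [MvPolynomial.coeff_sub, coeff_truncP, if_pos hm, coeff_truncP_mul K φ ψ hm, sub_self]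
    have := coeff_aeval_high v hv hd hK
    rw [map_sub, map_sub] at this
    exact sub_eq_zero.mp this
  rw [key, map_mul, MvPowerSeries.coeff_mul, MvPowerSeries.coeff_mul]
  refine Finset.sum_congr rfl fun p hp => ?_
  have hpq := Finset.HasAntidiagonal.mem_antidiagonal.mp hp
  have h1 : totalDeg p.1 ≤ K := by
    have := totalDeg_add p.1 p.2; rw [hpq] at this; omega
  have h2 : totalDeg p.2 ≤ K := by
    have := totalDeg_add p.1 p.2; rw [hpq] at this; omega
  rw [coeff_Csub_eq_aeval v hv φ h1, coeff_Csub_eq_aeval v hv ψ h2]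

lemma Csub_algebraMap (hv : ∀ i, OrdGE (v i) 1) (c : ℂ) :
    Csub v (algebraMap ℂ (PS ν) c) = algebraMap ℂ (PS ν) c := by
  rw [Algebra.algebraMap_eq_smul_one, Csub_smul, Csub_one v hv]

/-- Csub as an algebra hom -/
def CsubAlgHom (hv : ∀ i, OrdGE (v i) 1) : PS ν →ₐ[ℂ] PS ν where
  toFun := Csub v
  map_one' := Csub_one v hv
  map_mul' := Csub_mul v hv
  map_zero' := Csub_zero v
  map_add' := Csub_add v
  commutes' := Csub_algebraMap v hv
end CsubAlg

lemma ordGE_X (i : Fin ν) : OrdGE (MvPowerSeries.X i : PS ν) 1 := by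
  intro k hk
  have : k = 0 := by
    have h0 : totalDeg k = 0 := by omega
    ext j
    have := (Finset.sum_eq_zero_iff.mp h0) j (Finset.mem_univ j)
    simpa using this
  subst this
  exact MvPowerSeries.coeff_zero_X i

lemma tangent_ordGE {f : Fin ν → PS ν} (hf : TangentToId f) (i : Fin ν) :
    OrdGE (f i - MvPowerSeries.X i) 2 := by
  rw [ordGE_iff]
  exact_mod_cast hf i

lemma ordGE_iff_tangent {f : Fin ν → PS ν} (hf : ∀ i, OrdGE (f i - MvPowerSeries.X i) 2) :
    TangentToId f := by
  intro i
  have := ordGE_iff.mp (hf i)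
  exact_mod_cast this

lemma tangent_ordGE_one {f : Fin ν → PS ν} (hf : TangentToId f) (i : Fin ν) :
    OrdGE (f i) 1 := by
  have : f i = (f i - MvPowerSeries.X i) + MvPowerSeries.X i := by ring
  rw [this]
  exact ((tangent_ordGE hf i).mono (by omega)).add (ordGE_X i)

lemma prod_X_pow (m : Fin ν →₀ ℕ) :
    (∏ i, (MvPowerSeries.X i : PS ν) ^ m i) = MvPowerSeries.monomial m 1 := by
  have e1 : ∀ i : Fin ν, (MvPowerSeries.X i : PS ν) ^ m i
      = MvPolynomial.coeToMvPowerSeries.ringHom ((MvPolynomial.X i : MvPolynomial (Fin ν) ℂ) ^ m i) :=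
    fun i => by
      rw [map_pow, MvPolynomial.coeToMvPowerSeries.ringHom_apply, MvPolynomial.coe_X]
  have h2 : (∏ i, (MvPolynomial.X i : MvPolynomial (Fin ν) ℂ) ^ m i)
      = MvPolynomial.monomial m (1 : ℂ) := by
    rw [MvPolynomial.monomial_eq, map_one, one_mul,
      Finsupp.prod_fintype _ _ (fun i => pow_zero _)]
  rw [Finset.prod_congr rfl (fun i _ => e1 i), ← map_prod, h2,
    MvPolynomial.coeToMvPowerSeries.ringHom_apply, MvPolynomial.coe_monomial]

lemma prodpow_sub {v : Fin ν → PS ν} (hv : TangentToId v) (m : Fin ν →₀ ℕ) :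
    OrdGE ((∏ i, v i ^ m i) - MvPowerSeries.monomial m 1) (totalDeg m + 1) := by
  rw [← prod_X_pow]
  have := ordGE_prod_sub Finset.univ (fun i => v i ^ m i)
      (fun i => (MvPowerSeries.X i : PS ν) ^ m i) (fun i => m i)
    (fun i _ => by simpa using (tangent_ordGE_one hv i).pow (m i))
    (fun i _ => by simpa using (ordGE_X i).pow (m i))
    (fun i _ => by
      have := ordGE_pow_sub (tangent_ordGE_one hv i) (ordGE_X i)
        ((tangent_ordGE hv i).mono (by omega)) (m i)
      simpa using this)
  simpa [totalDeg] using this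

lemma coeff_prodpow_self {v : Fin ν → PS ν} (hv : TangentToId v) (n : Fin ν →₀ ℕ) :
    MvPowerSeries.coeff n (∏ i, v i ^ n i) = 1 := by
  have h0 : MvPowerSeries.coeff n ((∏ i, v i ^ n i) - MvPowerSeries.monomial n 1) = 0 :=
    prodpow_sub hv n n (by omega)
  rw [map_sub] at h0
  have h1 : MvPowerSeries.coeff n (MvPowerSeries.monomial n (1:ℂ)) = 1 := by
    simp [MvPowerSeries.coeff_monomial]
  rw [h1] at h0
  exact sub_eq_zero.mp h0

lemma coeff_prodpow_ne {v : Fin ν → PS ν} (hv : TangentToId v) {m n : Fin ν →₀ ℕ}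
    (hmn : m ≠ n) (hd : totalDeg n ≤ totalDeg m) :
    MvPowerSeries.coeff n (∏ i, v i ^ m i) = 0 := by
  have h0 : MvPowerSeries.coeff n ((∏ i, v i ^ m i) - MvPowerSeries.monomial m 1) = 0 :=
    prodpow_sub hv m n (by omega)
  rw [map_sub] at h0
  have h1 : MvPowerSeries.coeff n (MvPowerSeries.monomial m (1:ℂ)) = 0 := by
    rw [MvPowerSeries.coeff_monomial, if_neg (fun h => hmn (h.symm))]
  rw [h1, sub_zero] at h0
  exact h0

lemma coeff_Csub_eq_self {v : Fin ν → PS ν} (hv : TangentToId v) {d : ℕ} {φ : PS ν}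
    (hφ : OrdGE φ d) {n : Fin ν →₀ ℕ} (hn : totalDeg n ≤ d) :
    MvPowerSeries.coeff n (Csub v φ) = MvPowerSeries.coeff n φ := by
  rw [coeff_Csub, map_sum]
  rw [Finset.sum_eq_single n]
  · rw [map_smul, smul_eq_mul, coeff_prodpow_self hv n, mul_one]
  · intro b hb hbn
    rw [map_smul, smul_eq_mul]
    by_cases hbd : totalDeg b < d
    · rw [hφ b hbd, zero_mul]
    · have hble : totalDeg b ≤ totalDeg n := mem_degLE.mp hb
      rw [coeff_prodpow_ne hv hbn (by omega), mul_zero]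
  · intro hn'
    exact absurd (mem_degLE.mpr (le_refl (totalDeg n))) hn'

lemma Csub_tangent_coeff {v : Fin ν → PS ν} (hv : TangentToId v) {d : ℕ} {φ : PS ν}
    (hφ : OrdGE φ d) : OrdGE (Csub v φ - φ) (d + 1) := by
  intro k hk
  rw [map_sub, coeff_Csub_eq_self hv hφ (by omega), sub_self]

lemma Csub_tangentOp {v : Fin ν → PS ν} (hv : TangentToId v) : TangentToIdOp (Csub v) := by
  intro φ
  cases hφ : φ.order with
  | top =>
    have h0 : φ = 0 := MvPowerSeries.order_eq_top_iff.mp hφ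
    subst h0
    have : Csub v (0 : PS ν) = 0 := by
      ext n; rw [coeff_Csub]; simp
    rw [this, sub_zero, MvPowerSeries.order_zero]
    exact le_top
  | coe d =>
    have hφ' : OrdGE φ d := ordGE_iff.mpr (le_of_eq hφ.symm)
    have := ordGE_iff.mp (Csub_tangent_coeff hv hφ')
    exact_mod_cast this

lemma Csub_ne_zero {v : Fin ν → PS ν} (hv : TangentToId v) {φ : PS ν} (h : φ ≠ 0) :
    Csub v φ ≠ 0 := by
  have hfin := MvPowerSeries.ne_zero_iff_order_finite.mp h
  obtain ⟨n, hn1, hn2⟩ := MvPowerSeries.exists_coeff_ne_zero_and_order hfin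
  have hφ : OrdGE φ (totalDeg n) := by
    rw [ordGE_iff, ← degree_eq_totalDeg, hn2]
  intro h0
  apply hn1
  rw [← coeff_Csub_eq_self hv hφ (le_refl _), h0, map_zero]

section Inv
variable (v : Fin ν → PS ν)

def Tseq (ψ : PS ν) : ℕ → PS ν
  | 0 => ψ
  | k+1 => - (Csub v (Tseq ψ k) - Tseq ψ k)

def Sseq (ψ : PS ν) (K : ℕ) : PS ν := ∑ k ∈ Finset.range (K+1), Tseq v ψ k

lemma Tseq_ord (hv : TangentToId v) (ψ : PS ν) : ∀ k, OrdGE (Tseq v ψ k) k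
  | 0 => fun n hn => absurd hn (by omega)
  | (k+1) => by
    have ih := Tseq_ord hv ψ k
    exact (Csub_tangent_coeff hv ih).neg

lemma Csub_Sseq (hv : TangentToId v) (ψ : PS ν) (K : ℕ) :
    Csub v (Sseq v ψ K) = ψ - Tseq v ψ (K+1) := by
  induction K with
  | zero =>
    have h1 : Sseq v ψ 0 = ψ := by simp [Sseq, Tseq]
    rw [h1, show Tseq v ψ 1 = - (Csub v ψ - ψ) from rfl]
    ring
  | succ K ih =>
    have h1 : Sseq v ψ (K+1) = Sseq v ψ K + Tseq v ψ (K+1) := by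
      rw [Sseq, Sseq, Finset.sum_range_succ]
    rw [h1, Csub_add, ih, show Tseq v ψ (K+2) = - (Csub v (Tseq v ψ (K+1)) - Tseq v ψ (K+1))
      from rfl]
    ring

lemma Sseq_stable (hv : TangentToId v) (ψ : PS ν) {m : Fin ν →₀ ℕ} {K : ℕ}
    (hm : totalDeg m ≤ K) :
    MvPowerSeries.coeff m (Sseq v ψ K) = MvPowerSeries.coeff m (Sseq v ψ (totalDeg m)) := by
  induction K with
  | zero =>
    have : totalDeg m = 0 := by omega
    rw [this]
  | succ K ih =>
    rcases Nat.lt_or_ge (totalDeg m) (K+1) with h | h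
    · have h1 : Sseq v ψ (K+1) = Sseq v ψ K + Tseq v ψ (K+1) := by
        rw [Sseq, Sseq, Finset.sum_range_succ]
      rw [h1, map_add, Tseq_ord v hv ψ (K+1) m (by omega), add_zero, ih (by omega)]
    · have : totalDeg m = K + 1 := by omega
      rw [this]

def CsubInv (ψ : PS ν) : PS ν := fun n => MvPowerSeries.coeff n (Sseq v ψ (totalDeg n))

lemma coeff_CsubInv (ψ : PS ν) (n : Fin ν →₀ ℕ) :
    MvPowerSeries.coeff n (CsubInv v ψ) = MvPowerSeries.coeff n (Sseq v ψ (totalDeg n)) :=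
  rfl

lemma Csub_CsubInv (hv : TangentToId v) (ψ : PS ν) : Csub v (CsubInv v ψ) = ψ := by
  ext n
  rw [coeff_Csub]
  have h1 : MvPowerSeries.coeff n
      (∑ m ∈ degLE ν (totalDeg n), MvPowerSeries.coeff m (CsubInv v ψ) • ∏ i, v i ^ m i)
      = MvPowerSeries.coeff n
      (∑ m ∈ degLE ν (totalDeg n),
        MvPowerSeries.coeff m (Sseq v ψ (totalDeg n)) • ∏ i, v i ^ m i) := by
    congr 1
    refine Finset.sum_congr rfl fun m hm => ?_
    rw [coeff_CsubInv, Sseq_stable v hv ψ (mem_degLE.mp hm)]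
  rw [h1, ← coeff_Csub v (Sseq v ψ (totalDeg n)) n, Csub_Sseq v hv ψ (totalDeg n), map_sub,
    Tseq_ord v hv ψ (totalDeg n + 1) n (by omega), sub_zero]
end Inv
lemma order_X_eq (i : Fin ν) : (MvPowerSeries.X i : PS ν).order = 1 := by
  rw [MvPowerSeries.X_def, MvPowerSeries.order_monomial_of_ne_zero (one_ne_zero),
    degree_eq_totalDeg, totalDeg_single]
  rfl

lemma theta_ordGE {Θ : PS ν ≃ₐ[ℂ] PS ν} (hΘ : TangentToIdOp (fun φ : PS ν => Θ φ))
    {φ : PS ν} {d : ℕ} (h : OrdGE φ d) : OrdGE (Θ φ) d := by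
  rw [ordGE_iff] at h ⊢
  have h2 : (d : ℕ∞) ≤ (Θ φ - φ).order := le_trans (le_trans h le_self_add) (hΘ φ)
  have h3 := MvPowerSeries.min_order_le_add (f := φ) (g := Θ φ - φ)
  rw [show φ + (Θ φ - φ) = Θ φ by ring] at h3
  exact le_trans (le_min h h2) h3

lemma monomial_eq_smul_prod_X (m : Fin ν →₀ ℕ) (c : ℂ) :
    MvPowerSeries.monomial m c = c • ∏ i, (MvPowerSeries.X i : PS ν) ^ m i := by
  rw [prod_X_pow, ← map_smul, smul_eq_mul, mul_one]

lemma theta_eq_Csub {Θ : PS ν ≃ₐ[ℂ] PS ν} (hΘ : TangentToIdOp (fun φ : PS ν => Θ φ))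
    (φ : PS ν) : Θ φ = Csub (fun i => Θ (MvPowerSeries.X i)) φ := by
  ext n
  set K := totalDeg n with hK
  set P : PS ν := ∑ m ∈ degLE ν K, MvPowerSeries.monomial m (MvPowerSeries.coeff m φ)
    with hP
  have hPc : ∀ m, totalDeg m ≤ K → MvPowerSeries.coeff m P = MvPowerSeries.coeff m φ := by
    intro m hm
    rw [hP, map_sum, Finset.sum_eq_single m (fun b _ hb => by
        rw [MvPowerSeries.coeff_monomial, if_neg (fun e => hb e.symm)])
      (fun hm' => absurd (mem_degLE.mpr hm) hm')]
    simp [MvPowerSeries.coeff_monomial]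
  have hr : OrdGE (φ - P) (K + 1) := by
    intro k hk
    rw [map_sub, hPc k (by omega), sub_self]
  have hsplit : Θ φ = Θ P + Θ (φ - P) := by
    rw [← map_add, add_sub_cancel]
  have hrn : MvPowerSeries.coeff n (Θ (φ - P)) = 0 :=
    theta_ordGE hΘ hr n (by omega)
  have hTP : Θ P = ∑ m ∈ degLE ν K,
      MvPowerSeries.coeff m φ • ∏ i, (Θ (MvPowerSeries.X i)) ^ m i := by
    rw [hP, map_sum]
    refine Finset.sum_congr rfl fun m _ => ?_
    rw [monomial_eq_smul_prod_X, map_smul, map_prod]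
    congr 1
    exact Finset.prod_congr rfl fun i _ => map_pow _ _ _
  rw [hsplit, map_add, hrn, add_zero, hTP, coeff_Csub]

lemma tangent_of_theta {Θ : PS ν ≃ₐ[ℂ] PS ν} (hΘ : TangentToIdOp (fun φ : PS ν => Θ φ)) :
    TangentToId (fun i => Θ (MvPowerSeries.X i)) := by
  intro i
  have := hΘ (MvPowerSeries.X i)
  rw [order_X_eq i] at this
  exact le_trans (le_of_eq one_add_one_eq_two.symm) this

lemma Csub_X (v : Fin ν → PS ν) (hv : ∀ i, OrdGE (v i) 1) (i : Fin ν) :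
    Csub v (MvPowerSeries.X i) = v i := by
  ext n
  rw [coeff_Csub, map_sum]
  have hterm : ∀ m ∈ degLE ν (totalDeg n),
      MvPowerSeries.coeff n (MvPowerSeries.coeff m (MvPowerSeries.X i : PS ν)
          • ∏ j, v j ^ m j)
        = if m = Finsupp.single i 1 then MvPowerSeries.coeff n (∏ j, v j ^ m j) else 0 := by
    intro m _
    rw [map_smul, smul_eq_mul, MvPowerSeries.coeff_X]
    split
    · rw [one_mul]
    · rw [zero_mul]
  rw [Finset.sum_congr rfl hterm, Finset.sum_ite_eq' (degLE ν (totalDeg n)) (Finsupp.single i 1)]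
  have hprod : (∏ j, v j ^ (Finsupp.single i 1) j) = v i := by
    rw [Finset.prod_eq_single i (fun j _ hj => by
        rw [Finsupp.single_apply, if_neg (fun e => hj e.symm), pow_zero])
      (fun h => absurd (Finset.mem_univ i) h)]
    rw [Finsupp.single_apply, if_pos rfl, pow_one]
  by_cases hn : 1 ≤ totalDeg n
  · rw [if_pos (mem_degLE.mpr (by rw [totalDeg_single]; omega)), hprod]
  · rw [if_neg (fun hmem => by
      have := mem_degLE.mp hmem
      rw [totalDeg_single] at this
      omega), hv i n (by omega)]

/-- The map `v ↦ C_v` induces a bijection between the set of tangent-to-identity formal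
diffeomorphisms in ν variables and the set of tangent-to-identity ℂ-algebra automorphisms
of `ℂ[[z₁,…,z_ν]]`:  for every tangent-to-identity `v`, the operator `C_v` is a
tangent-to-identity algebra automorphism, and every tangent-to-identity algebra
automorphism is of the form `C_v` for a unique tangent-to-identity `v`. -/
theorem substitution_bijection_diffeos_automorphisms (ν : ℕ) (hν : 1 ≤ ν) :
    (∀ v : Fin ν → PS ν, TangentToId v →
      ∃ Θ : PS ν ≃ₐ[ℂ] PS ν, (∀ φ : PS ν, Θ φ = Csub v φ) ∧
        TangentToIdOp (fun φ : PS ν => Θ φ)) ∧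
    (∀ Θ : PS ν ≃ₐ[ℂ] PS ν, TangentToIdOp (fun φ : PS ν => Θ φ) →
      ∃! v : Fin ν → PS ν, TangentToId v ∧ ∀ φ : PS ν, Θ φ = Csub v φ) := by
  constructor
  · intro v hv
    have hv1 : ∀ i, OrdGE (v i) 1 := tangent_ordGE_one hv
    have hbij : Function.Bijective (CsubAlgHom v hv1) := by
      constructor
      · rw [injective_iff_map_eq_zero]
        intro a ha
        by_contra h
        exact Csub_ne_zero hv h ha
      · intro ψ
        exact ⟨CsubInv v ψ, Csub_CsubInv v hv ψ⟩
    refine ⟨AlgEquiv.ofBijective _ hbij, fun φ => rfl, ?_⟩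
    have hco : (fun φ : PS ν => (AlgEquiv.ofBijective _ hbij) φ) = Csub v := rfl
    rw [hco]
    exact Csub_tangentOp hv
  · intro Θ hΘ
    refine ⟨fun i => Θ (MvPowerSeries.X i), ⟨tangent_of_theta hΘ, theta_eq_Csub hΘ⟩, ?_⟩
    rintro v' ⟨hv't, hv'eq⟩
    funext i
    have h1 : Csub v' (MvPowerSeries.X i) = v' i :=
      Csub_X v' (tangent_ordGE_one hv't) i
    rw [← h1, ← hv'eq (MvPowerSeries.X i)]
end
end

section
/- Let λ ∈ ℂ^ν be non-resonant and let a = (a₁,…,a_ν) be a ν-tuple of formal power series in ν variables with ord a_i ≥ 2 for each i; set V_i = λ_i z_i + a_i. Then there exists a unique tangent-to-identity formal diffeomorphism h such that, for each i ∈ {1,…,ν}, Σ_{j=1}^{ν} λ_j z_j ∂h_i/∂z_j = V_i ∘ h as formal power series (i.e. h formally conjugates the vector field V = V_λ + a to its linear part V_λ). -/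
open MvPowerSeries Finsupp

noncomputable section

/-- Partial derivative `∂/∂z_i` of a formal power series. -/
def pd {ν : ℕ} (i : Fin ν) (φ : PS ν) : PS ν :=
  fun n => ((n i : ℂ) + 1) * MvPowerSeries.coeff (n + Finsupp.single i 1) φ

/-- The linear vector field operator `L_λ = ∑ⱼ λⱼ zⱼ ∂/∂zⱼ`. -/
def Lop {ν : ℕ} (lam : Fin ν → ℂ) (φ : PS ν) : PS ν :=
  ∑ j, (lam j • MvPowerSeries.X j) * pd j φ

/-- `λ ∈ ℂ^ν` is non-resonant if `λᵢ ≠ m·λ` for all `i` and all `m ∈ ℕ^ν` with `|m| ≥ 2`. -/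
def NonResonantL {ν : ℕ} (lam : Fin ν → ℂ) : Prop :=
  ∀ i : Fin ν, ∀ m : Fin ν → ℕ, 2 ≤ ∑ j, m j → lam i ≠ ∑ j, (m j : ℂ) * lam j

namespace FL

variable {ν : ℕ}

lemma totalDeg_eq_degree (n : Fin ν →₀ ℕ) : totalDeg n = Finsupp.degree n := by
  rw [Finsupp.degree, totalDeg]
  exact (Finset.sum_subset (Finset.subset_univ _)
    (fun i _ hi => Finsupp.notMem_support_iff.mp hi)).symm

lemma totalDeg_add (p q : Fin ν →₀ ℕ) : totalDeg (p + q) = totalDeg p + totalDeg q := by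
  simp [totalDeg, Finset.sum_add_distrib]

lemma totalDeg_eq_zero {n : Fin ν →₀ ℕ} (h : totalDeg n = 0) : n = 0 := by
  ext i
  have := Finset.sum_eq_zero_iff.mp h i (Finset.mem_univ i)
  simpa using this

@[simp] lemma totalDeg_single (j : Fin ν) : totalDeg (Finsupp.single j 1) = 1 := by
  simp [totalDeg, Finsupp.single_apply]

lemma totalDeg_eq_one {n : Fin ν →₀ ℕ} (h : totalDeg n = 1) :
    ∃ j, n = Finsupp.single j 1 := by
  obtain ⟨j, hj⟩ : ∃ j, n j ≠ 0 := by
    by_contra hc; push_neg at hc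
    simp [totalDeg, hc] at h
  have hle : n j ≤ totalDeg n :=
    Finset.single_le_sum (f := fun i => n i) (fun i _ => Nat.zero_le _) (Finset.mem_univ j)
  have h1 : n j = 1 := by omega
  have herase : ∑ i ∈ Finset.univ.erase j, n i = 0 := by
    have h2 : (∑ i ∈ Finset.univ.erase j, n i) + n j = ∑ i, n i := by
      simpa using Finset.sum_erase_add Finset.univ (fun i => n i) (Finset.mem_univ j)
    have ht : ∑ i, n i = 1 := h
    omega
  refine ⟨j, ?_⟩
  ext k
  rcases eq_or_ne k j with rfl | hk
  · simp [h1]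
  · have : n k = 0 := Finset.sum_eq_zero_iff.mp herase k
      (Finset.mem_erase.mpr ⟨hk, Finset.mem_univ k⟩)
    rw [this, Finsupp.single_eq_of_ne' (Ne.symm hk)]

lemma mem_degLE {m : Fin ν →₀ ℕ} {K : ℕ} : m ∈ degLE ν K ↔ totalDeg m ≤ K := by
  unfold degLE
  rw [Finset.mem_filter]
  constructor
  · exact fun h => h.2
  · intro h
    refine ⟨Finset.mem_Iic.mpr ?_, h⟩
    rw [Finsupp.le_def]
    intro i
    have : m i ≤ totalDeg m :=
      Finset.single_le_sum (f := fun i => m i) (fun i _ => Nat.zero_le _) (Finset.mem_univ i)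
    simpa using this.trans h

lemma coeff_Csub (v : Fin ν → PS ν) (φ : PS ν) (n : Fin ν →₀ ℕ) :
    MvPowerSeries.coeff n (Csub v φ) =
      ∑ m ∈ degLE ν (totalDeg n),
        MvPowerSeries.coeff m φ * MvPowerSeries.coeff n (∏ i, v i ^ m i) := by
  have : MvPowerSeries.coeff n (Csub v φ) = MvPowerSeries.coeff n
      (∑ m ∈ degLE ν (totalDeg n), MvPowerSeries.coeff m φ • ∏ i, v i ^ m i) := rfl
  rw [this, map_sum]
  exact Finset.sum_congr rfl fun m _ => coeff_smul _ _ _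

lemma prod_pow_single (v : Fin ν → PS ν) (j : Fin ν) :
    ∏ i, v i ^ (Finsupp.single j 1) i = v j := by
  rw [Finset.prod_eq_single j]
  · simp
  · intro b _ hb
    rw [Finsupp.single_eq_of_ne' (Ne.symm hb), pow_zero]
  · intro h; exact absurd (Finset.mem_univ j) h

lemma prod_pow_peel (v : Fin ν → PS ν) (m : Fin ν →₀ ℕ) (j : Fin ν) (hj : m j ≠ 0) :
    ∏ i, v i ^ m i = (∏ i, v i ^ ((m - Finsupp.single j 1) : Fin ν →₀ ℕ) i) * v j := by
  have key : ∀ i, m i = ((m - Finsupp.single j 1) : Fin ν →₀ ℕ) i + (Finsupp.single j 1) i := by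
    intro i
    rw [Finsupp.tsub_apply]
    rcases eq_or_ne i j with rfl | hij
    · rw [Finsupp.single_eq_same]; omega
    · rw [Finsupp.single_eq_of_ne' (Ne.symm hij)]; omega
  calc ∏ i, v i ^ m i
      = ∏ i, (v i ^ ((m - Finsupp.single j 1) : Fin ν →₀ ℕ) i * v i ^ (Finsupp.single j 1) i) := by
        refine Finset.prod_congr rfl fun i _ => ?_
        rw [← pow_add, ← key i]
    _ = (∏ i, v i ^ ((m - Finsupp.single j 1) : Fin ν →₀ ℕ) i) * ∏ i, v i ^ (Finsupp.single j 1) i :=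
        Finset.prod_mul_distrib
    _ = _ := by rw [prod_pow_single]

lemma totalDeg_sub_single (m : Fin ν →₀ ℕ) (j : Fin ν) (hj : m j ≠ 0) :
    totalDeg (m - Finsupp.single j 1) + 1 = totalDeg m := by
  have hle : Finsupp.single j 1 ≤ m := Finsupp.single_le_iff.mpr (by omega)
  have : (m - Finsupp.single j 1) + Finsupp.single j 1 = m := tsub_add_cancel_of_le hle
  calc totalDeg (m - Finsupp.single j 1) + 1
      = totalDeg (m - Finsupp.single j 1) + totalDeg (Finsupp.single j 1) := by simp
    _ = totalDeg ((m - Finsupp.single j 1) + Finsupp.single j 1) := (totalDeg_add _ _).symm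
    _ = totalDeg m := by rw [this]

lemma exists_ne_zero_of_totalDeg {m : Fin ν →₀ ℕ} (h : m ≠ 0) : ∃ j, m j ≠ 0 := by
  by_contra hc; push_neg at hc
  exact h (Finsupp.ext fun i => hc i)

/-- Fact O: the coefficient of `∏ v^m` vanishes below total degree `|m|`. -/
lemma coeff_prod_pow_eq_zero (v : Fin ν → PS ν)
    (hv : ∀ j, MvPowerSeries.coeff 0 (v j) = 0) :
    ∀ N (m : Fin ν →₀ ℕ), totalDeg m = N → ∀ p : Fin ν →₀ ℕ, totalDeg p < totalDeg m →
      MvPowerSeries.coeff p (∏ i, v i ^ m i) = 0 := by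
  intro N
  induction N using Nat.strong_induction_on with
  | _ N ih =>
    intro m hm p hp
    rcases eq_or_ne m 0 with rfl | hm0
    · simp [totalDeg] at hp
    obtain ⟨j, hj⟩ := exists_ne_zero_of_totalDeg hm0
    rw [prod_pow_peel v m j hj, MvPowerSeries.coeff_mul]
    refine Finset.sum_eq_zero fun q hq => ?_
    rw [Finset.HasAntidiagonal.mem_antidiagonal] at hq
    rcases eq_or_ne q.2 0 with h2 | h2
    · rw [h2, hv j, mul_zero]
    · have hq2 : 1 ≤ totalDeg q.2 := by
        rcases Nat.eq_zero_or_pos (totalDeg q.2) with h0 | h0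
        · exact absurd (totalDeg_eq_zero h0) h2
        · exact h0
      have hsum : totalDeg q.1 + totalDeg q.2 = totalDeg p := by
        rw [← totalDeg_add, hq]
      have hms : totalDeg (m - Finsupp.single j 1) + 1 = totalDeg m :=
        totalDeg_sub_single m j hj
      rcases eq_or_ne (m - Finsupp.single j 1) 0 with hz | hz
      · -- m = single j 1, totalDeg m = 1, so p has totalDeg < 1 hence p = 0, q.1 = q.2 = 0
        rw [hz] at hms
        have h0 : totalDeg (0 : Fin ν →₀ ℕ) = 0 := by simp [totalDeg]
        omega
      · have : MvPowerSeries.coeff q.1 (∏ i, v i ^ ((m - Finsupp.single j 1) : Fin ν →₀ ℕ) i) = 0 := by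
          refine ih (totalDeg (m - Finsupp.single j 1)) (by omega) _ rfl _ (by omega)
        rw [this, zero_mul]

/-- Claim C: for tuples agreeing up to degree `D`, coefficients of `∏ v^m` agree
in the relevant range. -/
lemma coeff_prod_pow_congr (v w : Fin ν → PS ν)
    (hv : ∀ j, MvPowerSeries.coeff 0 (v j) = 0)
    (hw : ∀ j, MvPowerSeries.coeff 0 (w j) = 0)
    (D : ℕ)
    (hvw : ∀ j (q : Fin ν →₀ ℕ), totalDeg q ≤ D →
      MvPowerSeries.coeff q (v j) = MvPowerSeries.coeff q (w j)) :
    ∀ N (m : Fin ν →₀ ℕ), totalDeg m = N → m ≠ 0 → ∀ n : Fin ν →₀ ℕ,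
      totalDeg n + 1 ≤ D + totalDeg m →
      MvPowerSeries.coeff n (∏ i, v i ^ m i) =
        MvPowerSeries.coeff n (∏ i, w i ^ m i) := by
  intro N
  induction N using Nat.strong_induction_on with
  | _ N ih =>
    intro m hm hm0 n hn
    obtain ⟨j, hj⟩ := exists_ne_zero_of_totalDeg hm0
    have hms : totalDeg (m - Finsupp.single j 1) + 1 = totalDeg m :=
      totalDeg_sub_single m j hj
    rcases eq_or_ne (m - Finsupp.single j 1) 0 with hz | hz
    · -- m = single j 1
      have hmj : m = Finsupp.single j 1 := by
        have hle : Finsupp.single j 1 ≤ m := Finsupp.single_le_iff.mpr (by omega)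
        have := tsub_add_cancel_of_le hle
        rw [hz, zero_add] at this
        exact this.symm
      rw [hmj, prod_pow_single, prod_pow_single]
      refine hvw j n ?_
      rw [hmj, totalDeg_single] at hn
      omega
    · rw [prod_pow_peel v m j hj, prod_pow_peel w m j hj,
        MvPowerSeries.coeff_mul, MvPowerSeries.coeff_mul]
      refine Finset.sum_congr rfl fun q hq => ?_
      rw [Finset.HasAntidiagonal.mem_antidiagonal] at hq
      rcases eq_or_ne q.2 0 with h2 | h2
      · rw [h2, hv j, hw j, mul_zero, mul_zero]
      · have hq2 : 1 ≤ totalDeg q.2 := by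
          rcases Nat.eq_zero_or_pos (totalDeg q.2) with h0 | h0
          · exact absurd (totalDeg_eq_zero h0) h2
          · exact h0
        have hsum : totalDeg q.1 + totalDeg q.2 = totalDeg n := by
          rw [← totalDeg_add, hq]
        rcases lt_or_ge (totalDeg q.1) (totalDeg (m - Finsupp.single j 1)) with hlt | hge
        · rw [coeff_prod_pow_eq_zero v hv _ _ rfl _ hlt,
            coeff_prod_pow_eq_zero w hw _ _ rfl _ hlt, zero_mul, zero_mul]
        · have h1 : MvPowerSeries.coeff q.1 (∏ i, v i ^ ((m - Finsupp.single j 1) : Fin ν →₀ ℕ) i) =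
              MvPowerSeries.coeff q.1 (∏ i, w i ^ ((m - Finsupp.single j 1) : Fin ν →₀ ℕ) i) :=
            ih (totalDeg (m - Finsupp.single j 1)) (by omega) _ rfl hz _ (by omega)
          have h2' : MvPowerSeries.coeff q.2 (v j) = MvPowerSeries.coeff q.2 (w j) :=
            hvw j q.2 (by omega)
          rw [h1, h2']

lemma coeff_low_of_order_two (φ : PS ν) (hφ : 2 ≤ φ.order) {m : Fin ν →₀ ℕ}
    (hm : totalDeg m ≤ 1) : MvPowerSeries.coeff m φ = 0 := by
  refine MvPowerSeries.coeff_of_lt_order ?_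
  refine lt_of_lt_of_le ?_ hφ
  rw [← totalDeg_eq_degree]
  exact_mod_cast Nat.lt_of_le_of_lt hm one_lt_two

/-- Lemma B: Csub of an order-≥2 series only depends on coefficients of `v` below
`totalDeg n`. -/
lemma coeff_Csub_congr (v w : Fin ν → PS ν)
    (hv : ∀ j, MvPowerSeries.coeff 0 (v j) = 0)
    (hw : ∀ j, MvPowerSeries.coeff 0 (w j) = 0)
    (φ : PS ν) (hφ : 2 ≤ φ.order) (n : Fin ν →₀ ℕ)
    (hvw : ∀ j (q : Fin ν →₀ ℕ), totalDeg q < totalDeg n →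
      MvPowerSeries.coeff q (v j) = MvPowerSeries.coeff q (w j)) :
    MvPowerSeries.coeff n (Csub v φ) = MvPowerSeries.coeff n (Csub w φ) := by
  rw [coeff_Csub, coeff_Csub]
  refine Finset.sum_congr rfl fun m hm => ?_
  rcases le_or_gt (totalDeg m) 1 with hm1 | hm2
  · rw [coeff_low_of_order_two φ hφ hm1, zero_mul, zero_mul]
  · have hm0 : m ≠ 0 := by
      intro h; rw [h] at hm2; simp [totalDeg] at hm2
    rcases lt_or_ge (totalDeg n) (totalDeg m) with hlt | hge
    · rw [coeff_prod_pow_eq_zero v hv _ _ rfl _ hlt,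
        coeff_prod_pow_eq_zero w hw _ _ rfl _ hlt]
    · have key := coeff_prod_pow_congr v w hv hw (totalDeg n - 1)
        (fun j q hq => hvw j q (by omega)) (totalDeg m) m rfl hm0 n (by omega)
      rw [key]

end FL

namespace FL

variable {ν : ℕ}

lemma coeff_pd (j : Fin ν) (φ : PS ν) (d : Fin ν →₀ ℕ) :
    MvPowerSeries.coeff d (pd j φ) =
      ((d j : ℂ) + 1) * MvPowerSeries.coeff (d + Finsupp.single j 1) φ := rfl

lemma coeff_Lop (lam : Fin ν → ℂ) (φ : PS ν) (n : Fin ν →₀ ℕ) :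
    MvPowerSeries.coeff n (Lop lam φ) =
      (∑ j, (n j : ℂ) * lam j) * MvPowerSeries.coeff n φ := by
  rw [Lop, map_sum, Finset.sum_mul]
  refine Finset.sum_congr rfl fun j _ => ?_
  have hX : (lam j • MvPowerSeries.X j : PS ν) =
      MvPowerSeries.monomial (Finsupp.single j 1) (lam j) := by
    rw [MvPowerSeries.X, ← map_smul, smul_eq_mul, mul_one]
  rw [hX, MvPowerSeries.coeff_monomial_mul]
  by_cases h : Finsupp.single j 1 ≤ n
  · rw [if_pos h, coeff_pd]
    have h1 : 1 ≤ n j := Finsupp.single_le_iff.mp h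
    have h2 : ((n - Finsupp.single j 1) : Fin ν →₀ ℕ) j = n j - 1 := by
      rw [Finsupp.tsub_apply, Finsupp.single_eq_same]
    have h3 : (n - Finsupp.single j 1) + Finsupp.single j 1 = n := tsub_add_cancel_of_le h
    rw [h2, h3]
    have : ((n j - 1 : ℕ) : ℂ) + 1 = (n j : ℂ) := by
      push_cast [Nat.cast_sub h1]; ring
    rw [← mul_assoc, this]; ring
  · rw [if_neg h]
    have : n j = 0 := by
      by_contra hc
      exact h (Finsupp.single_le_iff.mpr (by omega))
    rw [this]; push_cast; ring

lemma coeff_Csub_add (v : Fin ν → PS ν) (φ ψ : PS ν) (n : Fin ν →₀ ℕ) :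
    MvPowerSeries.coeff n (Csub v (φ + ψ)) =
      MvPowerSeries.coeff n (Csub v φ) + MvPowerSeries.coeff n (Csub v ψ) := by
  rw [coeff_Csub, coeff_Csub, coeff_Csub, ← Finset.sum_add_distrib]
  exact Finset.sum_congr rfl fun m _ => by rw [map_add, add_mul]

lemma coeff_Csub_smul_X (v : Fin ν → PS ν) (i : Fin ν)
    (hv : MvPowerSeries.coeff 0 (v i) = 0) (c : ℂ) (n : Fin ν →₀ ℕ) :
    MvPowerSeries.coeff n (Csub v (c • MvPowerSeries.X i)) =
      c * MvPowerSeries.coeff n (v i) := by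
  rw [coeff_Csub]
  by_cases h1 : 1 ≤ totalDeg n
  · rw [Finset.sum_eq_single (Finsupp.single i 1)]
    · rw [prod_pow_single, MvPowerSeries.coeff_smul, MvPowerSeries.coeff_X, if_pos rfl, mul_one]
    · intro m _ hne
      rw [MvPowerSeries.coeff_smul, MvPowerSeries.coeff_X, if_neg hne, mul_zero, zero_mul]
    · intro hni
      exact absurd (mem_degLE.mpr (by simpa using h1)) hni
  · have hn0 : n = 0 := totalDeg_eq_zero (by omega)
    subst hn0
    rw [hv, mul_zero]
    refine Finset.sum_eq_zero fun m hm => ?_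
    have hm0 : m = 0 := totalDeg_eq_zero (by have := mem_degLE.mp hm; omega)
    subst hm0
    rw [MvPowerSeries.coeff_smul, MvPowerSeries.coeff_X,
      if_neg (by exact fun h => (fun hz => one_ne_zero (Finsupp.single_eq_zero.mp hz)) h.symm), mul_zero, zero_mul]

lemma coeff_Csub_low (v : Fin ν → PS ν) (φ : PS ν) (hφ : 2 ≤ φ.order) (n : Fin ν →₀ ℕ)
    (hn : totalDeg n ≤ 1) : MvPowerSeries.coeff n (Csub v φ) = 0 := by
  rw [coeff_Csub]
  refine Finset.sum_eq_zero fun m hm => ?_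
  rw [coeff_low_of_order_two φ hφ (le_trans (mem_degLE.mp hm) hn), zero_mul]

lemma sum_single_mul (lam : Fin ν → ℂ) (j : Fin ν) :
    ∑ k, (((Finsupp.single j 1 : Fin ν →₀ ℕ) k : ℕ) : ℂ) * lam k = lam j := by
  rw [Finset.sum_eq_single j]
  · rw [Finsupp.single_eq_same]; push_cast; ring
  · intro b _ hb
    rw [Finsupp.single_eq_of_ne' (Ne.symm hb)]; push_cast; ring
  · intro h; exact absurd (Finset.mem_univ j) h

lemma lc_ne_zero (lam : Fin ν → ℂ) (hres : NonResonantL lam) {n : Fin ν →₀ ℕ}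
    (hn : 2 ≤ totalDeg n) (i : Fin ν) :
    (∑ j, (n j : ℂ) * lam j) - lam i ≠ 0 := by
  intro h
  exact hres i (fun j => n j) (by simpa [totalDeg] using hn) (sub_eq_zero.mp h).symm

/-- The recursively constructed coefficients. -/
noncomputable def co (lam : Fin ν → ℂ) (a : Fin ν → PS ν) : ℕ → (Fin ν →₀ ℕ) → Fin ν → ℂ
  | 0 => fun n i => if n = Finsupp.single i 1 then 1 else 0
  | (K + 1) => fun n i =>
      if totalDeg n ≤ K + 1 then co lam a K n i
      else if totalDeg n = K + 2 then
        MvPowerSeries.coeff n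
            (Csub (fun j => (fun m => co lam a K m j : PS ν)) (a i)) /
          ((∑ j, (n j : ℂ) * lam j) - lam i)
      else 0

/-- The candidate linearizing diffeomorphism. -/
noncomputable def hh (lam : Fin ν → ℂ) (a : Fin ν → PS ν) : Fin ν → PS ν :=
  fun i => (fun m => co lam a (totalDeg m) m i : PS ν)

lemma coeff_hh (lam : Fin ν → ℂ) (a : Fin ν → PS ν) (i : Fin ν) (m : Fin ν →₀ ℕ) :
    MvPowerSeries.coeff m (hh lam a i) = co lam a (totalDeg m) m i := rfl

lemma co_stab (lam : Fin ν → ℂ) (a : Fin ν → PS ν) (K L : ℕ) (hKL : K ≤ L)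
    (n : Fin ν →₀ ℕ) (i : Fin ν) (hn : totalDeg n ≤ K + 1) :
    co lam a L n i = co lam a K n i := by
  induction L, hKL using Nat.le_induction with
  | base => rfl
  | succ L hKL ih =>
    have h : totalDeg n ≤ L + 1 := by omega
    simp only [co]
    rw [if_pos h]
    exact ih

lemma co_eq_coeff_hh (lam : Fin ν → ℂ) (a : Fin ν → PS ν) (K : ℕ)
    (m : Fin ν →₀ ℕ) (i : Fin ν) (hn : totalDeg m ≤ K + 1) :
    co lam a K m i = MvPowerSeries.coeff m (hh lam a i) := by
  rw [coeff_hh]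
  rcases le_total K (totalDeg m) with h | h
  · exact (co_stab lam a K (totalDeg m) h m i hn).symm
  · exact co_stab lam a (totalDeg m) K h m i (by omega)

lemma coeff_hh_low (lam : Fin ν → ℂ) (a : Fin ν → PS ν) (i : Fin ν) {m : Fin ν →₀ ℕ}
    (hm : totalDeg m ≤ 1) :
    MvPowerSeries.coeff m (hh lam a i) = if m = Finsupp.single i 1 then 1 else 0 := by
  rw [← co_eq_coeff_hh lam a 0 m i (by omega)]
  rfl

lemma coeff_hh_zero (lam : Fin ν → ℂ) (a : Fin ν → PS ν) (i : Fin ν) :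
    MvPowerSeries.coeff 0 (hh lam a i) = 0 := by
  rw [coeff_hh_low lam a i (by simp [totalDeg])]
  rw [if_neg (fun h => (fun hz => one_ne_zero (Finsupp.single_eq_zero.mp hz)) h.symm)]

lemma coeff_hh_high (lam : Fin ν → ℂ) (a : Fin ν → PS ν) (ha : ∀ i, 2 ≤ (a i).order)
    (i : Fin ν) {n : Fin ν →₀ ℕ} (hn : 2 ≤ totalDeg n) :
    MvPowerSeries.coeff n (hh lam a i) =
      MvPowerSeries.coeff n (Csub (hh lam a) (a i)) /
        ((∑ j, (n j : ℂ) * lam j) - lam i) := by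
  obtain ⟨K, hK⟩ : ∃ K, totalDeg n = K + 2 := ⟨totalDeg n - 2, by omega⟩
  have hco : ∀ (q : Fin ν →₀ ℕ) (j : Fin ν),
      MvPowerSeries.coeff q ((fun m => co lam a K m j : PS ν)) = co lam a K q j :=
    fun _ _ => rfl
  have h1 : MvPowerSeries.coeff n (hh lam a i) = co lam a (K + 1) n i := by
    rw [coeff_hh, hK]
    exact co_stab lam a (K + 1) (K + 2) (by omega) n i (by omega)
  have h2 : co lam a (K + 1) n i =
      MvPowerSeries.coeff n
          (Csub (fun j => (fun m => co lam a K m j : PS ν)) (a i)) /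
        ((∑ j, (n j : ℂ) * lam j) - lam i) := by
    simp only [co]
    rw [if_neg (by omega), if_pos hK]
  have h3 : MvPowerSeries.coeff n
        (Csub (fun j => (fun m => co lam a K m j : PS ν)) (a i)) =
      MvPowerSeries.coeff n (Csub (hh lam a) (a i)) := by
    refine coeff_Csub_congr _ _ ?_ ?_ (a i) (ha i) n ?_
    · intro j
      rw [hco, co_eq_coeff_hh lam a K 0 j (by simp [totalDeg]), coeff_hh_zero]
    · intro j; exact coeff_hh_zero lam a j
    · intro j q hq
      rw [hco]
      exact co_eq_coeff_hh lam a K q j (by omega)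
  rw [h1, h2, h3]

/-- The coefficient-wise version of the conjugation equation. -/
lemma key_relation (lam : Fin ν → ℂ) (a : Fin ν → PS ν) (g : Fin ν → PS ν)
    (hg0 : ∀ j, MvPowerSeries.coeff 0 (g j) = 0) (i : Fin ν) (n : Fin ν →₀ ℕ)
    (heq : Lop lam (g i) = Csub g (lam i • MvPowerSeries.X i + a i)) :
    (∑ j, (n j : ℂ) * lam j) * MvPowerSeries.coeff n (g i) =
      lam i * MvPowerSeries.coeff n (g i) +
        MvPowerSeries.coeff n (Csub g (a i)) := by
  have h := congrArg (MvPowerSeries.coeff n) heq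
  rw [coeff_Lop, coeff_Csub_add, coeff_Csub_smul_X g i (hg0 i)] at h
  exact h

end FL

/-- For a non-resonant `λ ∈ ℂ^ν` and a nonlinear part `a` with `ord aᵢ ≥ 2`, there is a
unique tangent-to-identity formal diffeomorphism `h` with
`∑ⱼ λⱼ zⱼ ∂hᵢ/∂zⱼ = Vᵢ ∘ h` for each `i`, where `Vᵢ = λᵢ zᵢ + aᵢ`; that is, `h` formally
conjugates the vector field `V = V_λ + a` to its linear part `V_λ`. -/
theorem formal_linearization_vf (ν : ℕ) (lam : Fin ν → ℂ)
    (hres : NonResonantL lam)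
    (a : Fin ν → PS ν) (ha : ∀ i, 2 ≤ (a i).order) :
    ∃! h : Fin ν → PS ν, TangentToId h ∧
      ∀ i, Lop lam (h i) = Csub h (lam i • MvPowerSeries.X i + a i) := by
  classical
  set H := FL.hh lam a with hH
  have hH0 : ∀ j, MvPowerSeries.coeff 0 (H j) = 0 := fun j => FL.coeff_hh_zero lam a j
  have htan : TangentToId H := by
    intro i
    refine MvPowerSeries.le_order ?_
    intro d hd
    have hd' : totalDeg d ≤ 1 := by
      rw [FL.totalDeg_eq_degree]
      have h2 : Finsupp.degree d < 2 := by exact_mod_cast hd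
      omega
    rw [map_sub, FL.coeff_hh_low lam a i hd', MvPowerSeries.coeff_X, sub_self]
  have hmaineq : ∀ i, Lop lam (H i) = Csub H (lam i • MvPowerSeries.X i + a i) := by
    intro i
    apply MvPowerSeries.ext
    intro n
    rw [FL.coeff_Lop, FL.coeff_Csub_add, FL.coeff_Csub_smul_X H i (hH0 i)]
    rcases le_or_gt (totalDeg n) 1 with hn1 | hn2
    · rw [FL.coeff_Csub_low H (a i) (ha i) n hn1, add_zero]
      rcases Nat.le_one_iff_eq_zero_or_eq_one.mp hn1 with h0 | h1
      · have hn0 : n = 0 := FL.totalDeg_eq_zero h0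
        subst hn0
        rw [hH0 i]; ring
      · obtain ⟨j, rfl⟩ := FL.totalDeg_eq_one h1
        rw [FL.coeff_hh_low lam a i (by simp), FL.sum_single_mul]
        by_cases hji : (Finsupp.single j 1 : Fin ν →₀ ℕ) = Finsupp.single i 1
        · have hj : j = i := by
            exact (Finsupp.single_left_inj one_ne_zero).mp hji
          subst hj
          rw [if_pos rfl]
        · rw [if_neg hji]; ring
    · have hlc := FL.lc_ne_zero lam hres hn2 i
      rw [FL.coeff_hh_high lam a ha i hn2]
      have hS := div_mul_cancel₀
        (MvPowerSeries.coeff n (Csub H (a i))) hlc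
      linear_combination hS
  refine ⟨H, ⟨htan, hmaineq⟩, ?_⟩
  rintro g ⟨htg, heqg⟩
  have hg_low : ∀ (m : Fin ν →₀ ℕ), totalDeg m ≤ 1 → ∀ i,
      MvPowerSeries.coeff m (g i) = MvPowerSeries.coeff m (H i) := by
    intro m hm i
    have h1 : MvPowerSeries.coeff m (g i - MvPowerSeries.X i) = 0 := by
      refine MvPowerSeries.coeff_of_lt_order ?_
      refine lt_of_lt_of_le ?_ (htg i)
      rw [← FL.totalDeg_eq_degree]
      exact_mod_cast Nat.lt_of_le_of_lt hm one_lt_two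
    rw [map_sub, sub_eq_zero] at h1
    rw [h1, MvPowerSeries.coeff_X, FL.coeff_hh_low lam a i hm]
  have hg0 : ∀ j, MvPowerSeries.coeff 0 (g j) = 0 := by
    intro j
    rw [hg_low 0 (by simp [totalDeg]) j, hH0 j]
  have main : ∀ N (n : Fin ν →₀ ℕ), totalDeg n = N → ∀ i,
      MvPowerSeries.coeff n (g i) = MvPowerSeries.coeff n (H i) := by
    intro N
    induction N using Nat.strong_induction_on with
    | _ N ih =>
      intro n hn i
      rcases le_or_gt N 1 with hN | hN
      · exact hg_low n (by omega) i
      · have hn2 : 2 ≤ totalDeg n := by omega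
        have hlc := FL.lc_ne_zero lam hres hn2 i
        have hrg := FL.key_relation lam a g hg0 i n (heqg i)
        have hrH := FL.key_relation lam a H hH0 i n (hmaineq i)
        have hS : MvPowerSeries.coeff n (Csub g (a i)) =
            MvPowerSeries.coeff n (Csub H (a i)) := by
          refine FL.coeff_Csub_congr g H hg0 hH0 (a i) (ha i) n ?_
          intro j q hq
          exact ih (totalDeg q) (by omega) q rfl j
        rw [hS] at hrg
        have h1 : ((∑ j, (n j : ℂ) * lam j) - lam i) * MvPowerSeries.coeff n (g i) =
            ((∑ j, (n j : ℂ) * lam j) - lam i) * MvPowerSeries.coeff n (H i) := by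
          linear_combination hrg - hrH
        exact mul_left_cancel₀ hlc h1
  funext i
  exact MvPowerSeries.ext fun n => main (totalDeg n) n rfl i
end
end

section
/- Let α > 0 and define κ_α = 1 + 2α − 2√(α(1+α)) and φ_α(w) = w − α·w²/(1−w) for |w| < 1. Then the function Ψ_α(z) = (1 + z − (1 − 2(1+2α)z + z²)^{1/2})/(2(1+α)), where the principal branch of the square root is used, is holomorphic on the disc {z ∈ ℂ : |z| < κ_α}, satisfies Ψ_α(0) = 0 and Ψ_α'(0) = 1, and is a right composition inverse of φ_α: φ_α(Ψ_α(z)) = z for all |z| < κ_α. Moreover 1 − 2(1+2α)z + z² = (κ_α − z)(κ_α* − z) with κ_α* = 1/κ_α = 1 + 2α + 2√(α(1+α)). -/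
open Complex Metric

noncomputable section

lemma mul_mem_slitPlane_of_re_pos {a b : ℂ} (ha : 0 < a.re) (hb : 0 < b.re) :
    a * b ∈ Complex.slitPlane := by
  rw [Complex.mem_slitPlane_iff]
  by_cases h : (a * b).im = 0
  · left
    simp only [Complex.mul_re, Complex.mul_im] at h ⊢
    have h4 : (a.re * b.re - a.im * b.im) * b.re = a.re * (b.re * b.re + b.im * b.im) := by
      linear_combination (-b.im) * h
    nlinarith [h4, mul_pos ha (by nlinarith : 0 < b.re * b.re + b.im * b.im), hb]
  · right; exact h

/-- Inversion of `φ_α(w) = w - α w²/(1-w)`: the explicit function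
`Ψ_α(z) = (1 + z - (1 - 2(1+2α)z + z²)^{1/2})/(2(1+α))` (principal branch of the square
root) is holomorphic on the disc of radius `κ_α = 1 + 2α - 2√(α(1+α))`, is tangent to the
identity at `0`, and is a right composition inverse of `φ_α` there; moreover
`1 - 2(1+2α)z + z² = (κ_α - z)(κ_α* - z)` with `κ_α* = 1/κ_α = 1 + 2α + 2√(α(1+α))`. -/
theorem inverse_of_phi_alpha (α : ℝ) (hα : 0 < α)
    (κ : ℝ) (hκ : κ = 1 + 2 * α - 2 * Real.sqrt (α * (1 + α)))
    (κs : ℝ) (hκs : κs = 1 + 2 * α + 2 * Real.sqrt (α * (1 + α)))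
    (Ψ : ℂ → ℂ)
    (hΨ : Ψ = fun z : ℂ =>
      (1 + z - (1 - 2 * (1 + 2 * (α : ℂ)) * z + z ^ 2) ^ ((1 : ℂ) / 2)) /
        (2 * (1 + (α : ℂ))))
    (φ : ℂ → ℂ)
    (hφ : φ = fun w : ℂ => w - (α : ℂ) * w ^ 2 / (1 - w)) :
    DifferentiableOn ℂ Ψ (Metric.ball (0 : ℂ) κ) ∧
    Ψ 0 = 0 ∧ deriv Ψ 0 = 1 ∧
    (∀ z ∈ Metric.ball (0 : ℂ) κ, φ (Ψ z) = z) ∧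
    κs = 1 / κ ∧
    (∀ z : ℂ, 1 - 2 * (1 + 2 * (α : ℂ)) * z + z ^ 2 = ((κ : ℂ) - z) * ((κs : ℂ) - z)) := by
  have hsqnn : 0 ≤ Real.sqrt (α * (1 + α)) := Real.sqrt_nonneg _
  have hsq : Real.sqrt (α * (1 + α)) ^ 2 = α * (1 + α) := Real.sq_sqrt (by positivity)
  have hκκs : κ * κs = 1 := by rw [hκ, hκs]; nlinarith [hsq]
  have hκspos : 0 < κs := by rw [hκs]; positivity
  have hκpos : 0 < κ := by nlinarith [hκκs, hκspos]
  have hκle : κ ≤ κs := by rw [hκ, hκs]; linarith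
  have h1κ : κs = 1 / κ := by field_simp; linarith [hκκs]
  have hsum : κ + κs = 2 * (1 + 2 * α) := by rw [hκ, hκs]; ring
  have hCprod : (κ : ℂ) * (κs : ℂ) = 1 := by exact_mod_cast hκκs
  have hCsum : (κ : ℂ) + (κs : ℂ) = 2 * (1 + 2 * (α : ℂ)) := by exact_mod_cast hsum
  have hfact : ∀ z : ℂ, 1 - 2 * (1 + 2 * (α : ℂ)) * z + z ^ 2 = ((κ : ℂ) - z) * ((κs : ℂ) - z) := by
    intro z
    linear_combination (-1 : ℂ) * hCprod + z * hCsum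
  have hslit : ∀ z ∈ Metric.ball (0 : ℂ) κ,
      (1 - 2 * (1 + 2 * (α : ℂ)) * z + z ^ 2) ∈ Complex.slitPlane := by
    intro z hz
    rw [mem_ball, dist_zero_right] at hz
    have hre : z.re ≤ ‖z‖ := by
      simpa using Complex.re_le_norm z
    rw [hfact z]
    apply mul_mem_slitPlane_of_re_pos
    · simp only [Complex.sub_re, Complex.ofReal_re]
      linarith
    · simp only [Complex.sub_re, Complex.ofReal_re]
      linarith
  have hc : (2 * (1 + (α : ℂ))) ≠ 0 := by
    intro h
    have h2 : (2 * (1 + α) : ℝ) = 0 := by exact_mod_cast h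
    linarith
  -- derivative facts
  have hfd : ∀ z : ℂ, HasDerivAt (fun z : ℂ => 1 - 2 * (1 + 2 * (α : ℂ)) * z + z ^ 2)
      (-(2 * (1 + 2 * (α : ℂ))) + 2 * z) z := by
    intro z
    have h1 := (((hasDerivAt_id z).const_mul (2 * (1 + 2 * (α : ℂ)))).const_sub 1).add
      (hasDerivAt_pow 2 z)
    simp at h1
    exact h1
  have hball0 : (0 : ℂ) ∈ Metric.ball (0 : ℂ) κ := mem_ball_self hκpos
  have hcp : HasDerivAt (fun z : ℂ => (1 - 2 * (1 + 2 * (α : ℂ)) * z + z ^ 2) ^ ((1 : ℂ) / 2))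
      (-(1 + 2 * (α : ℂ))) 0 := by
    have h1 := (hfd 0).cpow_const (c := (1 : ℂ) / 2) (by simpa using hslit 0 hball0)
    have h2 : ((1 : ℂ) / 2) * ((1 : ℂ) - 2 * (1 + 2 * (α : ℂ)) * 0 + 0 ^ 2) ^ ((1 : ℂ) / 2 - 1) *
        (-(2 * (1 + 2 * (α : ℂ))) + 2 * 0) = -(1 + 2 * (α : ℂ)) := by
      norm_num
      ring
    rw [h2] at h1
    exact h1
  have hΨd : HasDerivAt Ψ 1 0 := by
    rw [hΨ]
    have h3 := (((hasDerivAt_id (0 : ℂ)).const_add 1).sub hcp).div_const (2 * (1 + (α : ℂ)))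
    refine h3.congr_deriv ?_
    rw [div_eq_iff hc]
    ring
  refine ⟨?_, ?_, hΨd.deriv, ?_, h1κ, hfact⟩
  · -- differentiability
    intro z hz
    apply DifferentiableAt.differentiableWithinAt
    rw [hΨ]
    apply DifferentiableAt.div_const
    apply DifferentiableAt.sub
    · exact (differentiableAt_const _).add differentiableAt_fun_id
    · exact ((hfd z).cpow_const (c := (1 : ℂ) / 2) (hslit z hz)).differentiableAt
  · rw [hΨ]; simp
  · -- right inverse
    intro z hz
    have hsl := hslit z hz
    have hx0 : (1 - 2 * (1 + 2 * (α : ℂ)) * z + z ^ 2) ≠ 0 := Complex.slitPlane_ne_zero hsl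
    have hs2 : ((1 - 2 * (1 + 2 * (α : ℂ)) * z + z ^ 2) ^ ((1 : ℂ) / 2)) *
        ((1 - 2 * (1 + 2 * (α : ℂ)) * z + z ^ 2) ^ ((1 : ℂ) / 2)) =
        1 - 2 * (1 + 2 * (α : ℂ)) * z + z ^ 2 := by
      rw [← Complex.cpow_add _ _ hx0]
      norm_num
    generalize hS : (1 - 2 * (1 + 2 * (α : ℂ)) * z + z ^ 2) ^ ((1 : ℂ) / 2) = s at hs2
    have hΨz : Ψ z = (1 + z - s) / (2 * (1 + (α : ℂ))) := by rw [hΨ]; simp only [hS]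
    have hαC : (4 * α * (1 + α) : ℝ) ≠ 0 := by positivity
    have hden : (1 : ℂ) - Ψ z ≠ 0 := by
      rw [hΨz]
      intro h
      rw [sub_eq_zero, eq_div_iff hc] at h
      have h4 : ((4 * α * (1 + α) : ℝ) : ℂ) = 0 := by
        push_cast
        linear_combination hs2 - (s + z - 1 - 2 * (α : ℂ)) * h
      exact hαC (by exact_mod_cast h4)
    rw [hφ]
    simp only
    have hgoal : Ψ z * (1 - Ψ z) - (α : ℂ) * Ψ z ^ 2 = z * (1 - Ψ z) := by
      have hP : Ψ z * (2 * (1 + (α : ℂ))) = 1 + z - s := by rw [hΨz, div_mul_cancel₀ _ hc]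
      have h4a : (4 * (1 + (α : ℂ))) ≠ 0 := by
        intro h; apply hc; linear_combination h / 2
      apply mul_left_cancel₀ h4a
      linear_combination (2 + 2 * z - Ψ z * (2 * (1 + (α : ℂ))) - (1 + z - s)) * hP - hs2
    field_simp [hden]
    linear_combination hgoal
end
end

section
/- Let ν ≥ 1 and α > 0. Define φ_{α,ν} : {z ∈ ℂ^ν : |z₁+⋯+z_ν| < 1} → ℂ^ν by φ_{α,ν,i}(z) = z_i − α·Z²/(1−Z) with Z = z₁+⋯+z_ν, for i = 1,…,ν. Let Ψ_{αν,1} be the one-dimensional inverse Ψ_{αν,1}(z) = (1 + z − (1 − 2(1+2αν)z + z²)^{1/2})/(2(1+αν)) (principal branch), and define Ψ_{α,ν} : 𝔻_{κ_{αν}/ν}^ν → ℂ^ν by Ψ_{α,ν,i}(z) = z_i + (1/ν)(Ψ_{αν,1}(Z) − Z) with Z = z₁+⋯+z_ν, where κ_β = 1 + 2β − 2√(β(1+β)). Then Ψ_{α,ν} is holomorphic on the polydisc 𝔻_{κ_{αν}/ν}^ν and satisfies Ψ_{α,ν}(φ_{α,ν}(z)) = z for all z in a neighborhood of 0 in ℂ^ν.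 -/
open Complex Metric

noncomputable section

set_option maxHeartbeats 1000000 in
/-- The ν-dimensional inverse `Ψ_{α,ν}`, built from the one-dimensional inverse
`Ψ_{αν,1}(z) = (1 + z - (1 - 2(1+2αν)z + z²)^{1/2})/(2(1+αν))` by
`Ψ_{α,ν,i}(z) = z_i + (1/ν)(Ψ_{αν,1}(Z) - Z)` with `Z = z₁+⋯+z_ν`, is holomorphic on the
polydisc of radius `κ_{αν}/ν` (where `κ_β = 1 + 2β - 2√(β(1+β))`) and it is a left
composition inverse near `0` of `φ_{α,ν}` defined by `φ_{α,ν,i}(z) = z_i - α Z²/(1-Z)`. -/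
theorem inverse_of_phi_alpha_nu (ν : ℕ) (hν : 1 ≤ ν) (α : ℝ) (hα : 0 < α)
    (κ : ℝ) (hκ : κ = 1 + 2 * (α * ν) - 2 * Real.sqrt ((α * ν) * (1 + α * ν)))
    (Ψ₁ : ℂ → ℂ)
    (hΨ₁ : Ψ₁ = fun w : ℂ =>
      (1 + w - (1 - 2 * (1 + 2 * ((α : ℂ) * (ν : ℂ))) * w + w ^ 2) ^ ((1 : ℂ) / 2)) /
        (2 * (1 + (α : ℂ) * (ν : ℂ))))
    (φ : (Fin ν → ℂ) → (Fin ν → ℂ))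
    (hφ : φ = fun z i => z i - (α : ℂ) * (∑ j, z j) ^ 2 / (1 - ∑ j, z j))
    (Ψ : (Fin ν → ℂ) → (Fin ν → ℂ))
    (hΨ : Ψ = fun z i => z i + (1 / (ν : ℂ)) * (Ψ₁ (∑ j, z j) - ∑ j, z j)) :
    DifferentiableOn ℂ Ψ (Metric.ball (0 : Fin ν → ℂ) (κ / ν)) ∧
    ∃ ε > 0, ∀ z ∈ Metric.ball (0 : Fin ν → ℂ) ε, Ψ (φ z) = z := by
  have hνR : (0 : ℝ) < ν := by exact_mod_cast hν
  have hν0 : (ν : ℝ) ≠ 0 := ne_of_gt hνR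
  have hνC : (ν : ℂ) ≠ 0 := Nat.cast_ne_zero.2 (by omega)
  set β : ℝ := α * ν with hβ
  have hβ0 : 0 < β := by positivity
  have h1β : (0 : ℝ) < 1 + β := by linarith
  have h1βne : (1 + β : ℝ) ≠ 0 := ne_of_gt h1β
  set s : ℝ := Real.sqrt (β * (1 + β)) with hsdef
  have hs : s ^ 2 = β * (1 + β) := Real.sq_sqrt (by positivity)
  have hs0 : 0 ≤ s := Real.sqrt_nonneg _
  subst hκ
  set κ : ℝ := 1 + 2 * β - 2 * s with hκ
  have hκ1 : κ ≤ 1 := by nlinarith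
  have hcC : (α : ℂ) * (ν : ℂ) = ((β : ℝ) : ℂ) := by push_cast [hβ]; ring
  -- the sum of coordinates is bounded by ν ‖z‖
  have hsum_bound : ∀ (z : Fin ν → ℂ), ‖∑ j, z j‖ ≤ ν * ‖z‖ := by
    intro z
    calc ‖∑ j, z j‖ = ‖∑ j, z j‖ := rfl
      _ ≤ ∑ j, ‖z j‖ := norm_sum_le _ _
      _ ≤ ∑ _j : Fin ν, ‖z‖ := Finset.sum_le_sum fun j _ => norm_le_pi_norm z j
      _ = ν * ‖z‖ := by simp [mul_comm]
  -- slitPlane membership for the radicand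
  have key : ∀ w : ℂ, ‖w‖ < κ →
      (1 - 2 * (1 + 2 * ((α : ℂ) * (ν : ℂ))) * w + w ^ 2) ∈ Complex.slitPlane := by
    intro w hw
    have hre : w.re ≤ ‖w‖ := Complex.re_le_norm w
    have hre' : |w.re| ≤ ‖w‖ := Complex.abs_re_le_norm w
    have hco : 2 * (1 + 2 * ((α : ℂ) * (ν : ℂ))) = (((2 * (1 + 2 * β)) : ℝ) : ℂ) := by
      rw [hcC]; push_cast; ring
    rw [hco]
    rcases eq_or_ne w.im 0 with h0 | h0
    · left
      have h1 : (1 - ((2 * (1 + 2 * β) : ℝ) : ℂ) * w + w ^ 2).re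
          = 1 - 2 * (1 + 2 * β) * w.re + (w.re ^ 2 - w.im ^ 2) := by
        simp [Complex.add_re, Complex.sub_re, Complex.mul_re, Complex.ofReal_re,
          Complex.ofReal_im, sq, Complex.mul_im]
        try ring
      rw [h1, h0]
      have hwκ : w.re < κ := lt_of_le_of_lt hre hw
      have hwκ' : -κ < w.re := by
        have h := neg_abs_le w.re
        have := lt_of_le_of_lt hre' hw
        linarith
      have h2 : 0 < κ - w.re := by linarith
      have h3 : 0 < (1 + 2 * β + 2 * s) - w.re := by
        have : κ ≤ 1 + 2 * β + 2 * s := by rw [hκ]; linarith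
        linarith
      nlinarith [mul_pos h2 h3]
    · right
      have h1 : (1 - ((2 * (1 + 2 * β) : ℝ) : ℂ) * w + w ^ 2).im
          = w.im * (2 * w.re - 2 * (1 + 2 * β)) := by
        simp [Complex.add_im, Complex.sub_im, Complex.mul_im, Complex.ofReal_re,
          Complex.ofReal_im, sq, Complex.mul_re]
        try ring
      rw [h1]
      have hw1 : ‖w‖ < 1 := lt_of_lt_of_le hw hκ1
      have : w.re < 1 + 2 * β := by nlinarith
      exact mul_ne_zero h0 (by linarith)
  constructor
  · -- differentiability
    rw [hΨ, differentiableOn_pi]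
    intro i
    have hZdiff : Differentiable ℂ (fun z : Fin ν → ℂ => ∑ j, z j) :=
      Differentiable.fun_sum fun j _ => differentiable_apply j
    apply DifferentiableOn.add ((differentiable_apply i).differentiableOn)
    intro z hz
    have hZ : ‖∑ j, z j‖ < κ := by
      have hznorm : ‖z‖ < κ / ν := by
        rw [mem_ball, dist_zero_right] at hz; exact hz
      calc ‖∑ j, z j‖ ≤ ν * ‖z‖ := hsum_bound z
        _ < ν * (κ / ν) := mul_lt_mul_of_pos_left hznorm hνR
        _ = κ := by field_simp
    have hZdiffAt : DifferentiableAt ℂ (fun z : Fin ν → ℂ => ∑ j, z j) z := hZdiff z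
    have hrad1 : DifferentiableAt ℂ (fun z : Fin ν → ℂ =>
        1 - 2 * (1 + 2 * ((α : ℂ) * (ν : ℂ))) * (∑ j, z j) + (∑ j, z j) ^ 2) z :=
      ((differentiableAt_const _).sub ((differentiableAt_const _).mul hZdiffAt)).add
        (hZdiffAt.pow 2)
    have hrad : DifferentiableAt ℂ (fun z : Fin ν → ℂ =>
        (1 - 2 * (1 + 2 * ((α : ℂ) * (ν : ℂ))) * (∑ j, z j) + (∑ j, z j) ^ 2)
          ^ ((1 : ℂ) / 2)) z :=
      hrad1.cpow (differentiableAt_const _) (key _ hZ)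
    have hnum : DifferentiableAt ℂ (fun z : Fin ν → ℂ =>
        1 + (∑ j, z j) - (1 - 2 * (1 + 2 * ((α : ℂ) * (ν : ℂ))) * (∑ j, z j)
          + (∑ j, z j) ^ 2) ^ ((1 : ℂ) / 2)) z :=
      ((differentiableAt_const _).add hZdiffAt).sub hrad
    have hmain : DifferentiableAt ℂ (fun z : Fin ν → ℂ => Ψ₁ (∑ j, z j) - ∑ j, z j) z := by
      rw [hΨ₁]
      simp only [div_eq_mul_inv]
      exact (hnum.mul_const _).sub hZdiffAt
    exact (hmain.const_mul _).differentiableWithinAt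
  · -- the inverse identity
    set c : ℂ := (α : ℂ) * (ν : ℂ) with hc
    refine ⟨(8 * (1 + β) * ν)⁻¹, by positivity, ?_⟩
    intro z hz
    set δ : ℝ := (8 * (1 + β))⁻¹ with hδ
    have hδ0 : 0 < δ := by positivity
    have hδ1 : δ * (8 * (1 + β)) = 1 := by rw [hδ]; field_simp
    have hδ8 : δ ≤ 1 / 8 := by nlinarith [mul_nonneg hδ0.le hβ0.le]
    have hβδ : β * δ ≤ 1 / 8 := by nlinarith
    set Z : ℂ := ∑ j, z j with hZdef
    have hZδ : ‖Z‖ < δ := by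
      have hznorm : ‖z‖ < (8 * (1 + β) * ν)⁻¹ := by
        rw [mem_ball, dist_zero_right] at hz; exact hz
      have hεδ : (ν : ℝ) * (8 * (1 + β) * ν)⁻¹ = δ := by
        rw [hδ]; field_simp
      calc ‖Z‖ ≤ ν * ‖z‖ := hsum_bound z
        _ < ν * (8 * (1 + β) * ν)⁻¹ := mul_lt_mul_of_pos_left hznorm hνR
        _ = δ := hεδ
    have hZ8 : ‖Z‖ < 1 / 8 := lt_of_lt_of_le hZδ hδ8
    have h1Z : (7 : ℝ) / 8 ≤ ‖1 - Z‖ := by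
      have h := norm_sub_norm_le (1 : ℂ) Z
      rw [norm_one] at h
      linarith
    have h1Z0 : (1 : ℂ) - Z ≠ 0 := by
      intro h
      rw [h] at h1Z
      simp at h1Z
      linarith
    set W : ℂ := Z - (ν : ℂ) * ((α : ℂ) * Z ^ 2 / (1 - Z)) with hWdef
    have habsc : ‖(ν : ℂ) * (α : ℂ)‖ = β := by
      rw [show ((ν : ℂ) * (α : ℂ)) = ((β : ℝ) : ℂ) by push_cast [hβ]; ring,
        Complex.norm_of_nonneg hβ0.le]
    have hWtail : ‖(ν : ℂ) * ((α : ℂ) * Z ^ 2 / (1 - Z))‖ ≤ 1 / 56 := by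
      have habs : ‖(ν : ℂ) * ((α : ℂ) * Z ^ 2 / (1 - Z))‖
          = β * (‖Z‖) ^ 2 / ‖1 - Z‖ := by
        rw [show (ν : ℂ) * ((α : ℂ) * Z ^ 2 / (1 - Z))
            = ((ν : ℂ) * (α : ℂ)) * Z ^ 2 / (1 - Z) by ring]
        rw [norm_div, norm_mul, habsc, norm_pow]
      rw [habs, div_le_iff₀ (by linarith)]
      have e1 : ‖Z‖ ^ 2 ≤ δ ^ 2 := by
        nlinarith [norm_nonneg Z]
      have e2 : β * ‖Z‖ ^ 2 ≤ β * δ ^ 2 := by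
        exact mul_le_mul_of_nonneg_left e1 hβ0.le
      have e4 : (β * δ) * δ ≤ (1 / 8) * (1 / 8) :=
        mul_le_mul hβδ hδ8 hδ0.le (by norm_num)
      nlinarith
    have hW : ‖W‖ ≤ 1 / 7 := by
      have h := norm_sub_le Z ((ν : ℂ) * ((α : ℂ) * Z ^ 2 / (1 - Z)))
      rw [hWdef]
      linarith
    set A : ℂ := 1 + W - 2 * (1 + c) * Z with hAdef
    have hAre : 0 < A.re := by
      have h2c : ‖2 * (1 + c)‖ = 2 * (1 + β) := by
        rw [hcC,
          show (2 : ℂ) * (1 + ((β : ℝ) : ℂ)) = (((2 * (1 + β)) : ℝ) : ℂ) by push_cast; ring,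
          Complex.norm_of_nonneg (by linarith)]
      have h3 : ‖2 * (1 + c) * Z‖ ≤ 1 / 4 := by
        rw [norm_mul, h2c]
        have : 2 * (1 + β) * ‖Z‖ ≤ 2 * (1 + β) * δ :=
          mul_le_mul_of_nonneg_left hZδ.le (by linarith)
        nlinarith
      have h2 : ‖W - 2 * (1 + c) * Z‖ ≤ 1 / 7 + 1 / 4 := by
        have h := norm_sub_le W (2 * (1 + c) * Z)
        linarith
      have h4 : |(W - 2 * (1 + c) * Z).re| ≤ 1 / 7 + 1 / 4 :=
        le_trans (Complex.abs_re_le_norm _) h2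
      have h5 : A.re = 1 + (W - 2 * (1 + c) * Z).re := by
        rw [show A = 1 + (W - 2 * (1 + c) * Z) by rw [hAdef]; ring]
        simp
      rw [h5]
      have h6 := abs_le.1 h4
      linarith [h6.1]
    have hA2 : A ^ 2 = 1 - 2 * (1 + 2 * c) * W + W ^ 2 := by
      rw [hAdef, hWdef, hc]
      field_simp
      ring
    have hsqrt : (1 - 2 * (1 + 2 * c) * W + W ^ 2) ^ ((1 : ℂ) / 2) = A := by
      rw [← hA2, one_div]
      exact Complex.sq_cpow_two_inv hAre
    have hden : (2 * (1 + c)) ≠ 0 := by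
      rw [hcC]
      have h7 : (1 + ((β : ℝ) : ℂ)) ≠ 0 := by
        rw [show (1 + ((β : ℝ) : ℂ)) = ((1 + β : ℝ) : ℂ) by push_cast; ring]
        exact Complex.ofReal_ne_zero.mpr h1βne
      exact mul_ne_zero two_ne_zero h7
    have hΨ₁W : Ψ₁ W = Z := by
      rw [hΨ₁]
      simp only
      rw [hsqrt, show (1 : ℂ) + W - A = 2 * (1 + c) * Z by rw [hAdef]; ring]
      exact mul_div_cancel_left₀ Z hden
    funext i
    rw [hΨ, hφ]
    simp only
    have hsumφ : (∑ j, (z j - (α : ℂ) * Z ^ 2 / (1 - Z))) = W := by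
      rw [Finset.sum_sub_distrib, Finset.sum_const, Finset.card_univ, Fintype.card_fin,
        nsmul_eq_mul, ← hZdef, hWdef]
    rw [← hZdef, hsumφ, hΨ₁W, hWdef]
    field_simp
    ring
end
end

section
/- Let z ∈ ℂ. If |Im z| > 1/2, then |e^{2πiz} − 1| > 1/3. If |Im z| ≤ 1/2, then |e^{2πiz} − 1| ≥ d(z, ℤ), where d(z, ℤ) = inf{|z − n| : n ∈ ℤ} is the distance from z to ℤ in ℂ. -/
open Complex Metric

noncomputable section

/-- The set of integers inside ℂ. -/
def intsC : Set ℂ := Set.range ((↑·) : ℤ → ℂ)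

lemma sin_sq_ge (u : ℝ) (hu : |u| ≤ 1 / 2) : 4 * u ^ 2 ≤ Real.sin (Real.pi * u) ^ 2 := by
  have hpi := Real.pi_gt_three
  have h1 : 2 / Real.pi * (Real.pi * |u|) ≤ Real.sin (Real.pi * |u|) :=
    Real.mul_le_sin (by positivity) (by nlinarith [abs_nonneg u])
  have h2 : 2 / Real.pi * (Real.pi * |u|) = 2 * |u| := by
    field_simp
  rw [h2] at h1
  have h3 : Real.sin (Real.pi * u) ^ 2 = Real.sin (Real.pi * |u|) ^ 2 := by
    rcases abs_cases u with ⟨h, _⟩ | ⟨h, _⟩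
    · rw [h]
    · rw [h, mul_neg, Real.sin_neg, neg_sq]
  rw [h3]
  nlinarith [abs_nonneg u, _root_.sq_abs u]

lemma key_ineq (t u : ℝ) (ht : |t| ≤ Real.pi) (hu : |u| ≤ 1 / 2) :
    u ^ 2 + t ^ 2 / (4 * Real.pi ^ 2) ≤
      (Real.exp t - 1) ^ 2 + 4 * Real.exp t * Real.sin (Real.pi * u) ^ 2 := by
  have hpi := Real.pi_gt_three
  have hpi4 := Real.pi_lt_d2
  have hsin := sin_sq_ge u hu
  have hexp_pos := Real.exp_pos t
  have ht2 : t ^ 2 ≤ Real.pi ^ 2 := by nlinarith [abs_nonneg t, _root_.sq_abs t]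
  have hu2 : u ^ 2 ≤ 1 / 4 := by nlinarith [abs_nonneg u, _root_.sq_abs u]
  rcases le_or_gt 0 t with h0 | h0
  · -- t ≥ 0 : exp t ≥ 1 and exp t - 1 ≥ t
    have h1 : t + 1 ≤ Real.exp t := Real.add_one_le_exp t
    have h2 : t ^ 2 / (4 * Real.pi ^ 2) ≤ t ^ 2 := by
      apply div_le_self (by positivity); nlinarith
    nlinarith [sq_nonneg (Real.sin (Real.pi * u))]
  · -- t < 0
    have hA : t ^ 2 / (4 * Real.pi ^ 2) ≤ (Real.exp t - 1) ^ 2 := by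
      have h1 : -t + 1 ≤ Real.exp (-t) := Real.add_one_le_exp (-t)
      have h2 : Real.exp t * Real.exp (-t) = 1 := by
        rw [← Real.exp_add]; simp
      -- exp t ≤ 1/(1-t), so 1 - exp t ≥ -t/(1-t) ≥ -t/(2π)
      have h3 : Real.exp t * (1 - t) ≤ 1 := by nlinarith
      have h4 : -t / (2 * Real.pi) ≤ 1 - Real.exp t := by
        rw [div_le_iff₀ (by positivity)]
        have h5 : 1 - t ≤ 2 * Real.pi := by
          have : -t ≤ Real.pi := by rw [abs_le] at ht; linarith [ht.1]
          nlinarith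
        nlinarith
      have h6 : (-t / (2 * Real.pi)) ^ 2 ≤ (1 - Real.exp t) ^ 2 := by
        have hexple1 : Real.exp t ≤ 1 := by nlinarith
        have hpos : (0:ℝ) ≤ -t / (2 * Real.pi) :=
          div_nonneg (by linarith) (by positivity)
        exact sq_le_sq' (by linarith) h4
      calc t ^ 2 / (4 * Real.pi ^ 2) = (-t / (2 * Real.pi)) ^ 2 := by ring
        _ ≤ (1 - Real.exp t) ^ 2 := h6
        _ = (Real.exp t - 1) ^ 2 := by ring
    rcases le_or_gt (1 / 16) (Real.exp t) with h16 | h16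
    · -- exp t ≥ 1/16 : 4 exp t sin² ≥ 4·(1/16)·4u² = u²
      nlinarith [sq_nonneg (Real.sin (Real.pi * u))]
    · -- exp t < 1/16 : (exp t - 1)² ≥ (15/16)² ≥ 1/4 + 1/4
      have h7 : (15 / 16 : ℝ) ^ 2 ≤ (Real.exp t - 1) ^ 2 := by
        nlinarith [sq_nonneg (Real.exp t - 1 / 16)]
      have h8 : t ^ 2 / (4 * Real.pi ^ 2) ≤ 1 / 4 := by
        rw [div_le_iff₀ (by positivity)]; nlinarith
      nlinarith [sq_nonneg (Real.sin (Real.pi * u))]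

lemma abs_exp_sub_one_sq (w : ℂ) :
    ‖Complex.exp (2 * Real.pi * Complex.I * w) - 1‖ ^ 2 =
      (Real.exp (-(2 * Real.pi * w.im)) - 1) ^ 2 +
        4 * Real.exp (-(2 * Real.pi * w.im)) * Real.sin (Real.pi * w.re) ^ 2 := by
  set t : ℝ := -(2 * Real.pi * w.im) with hT
  have hre : (2 * Real.pi * Complex.I * w).re = t := by
    simp [Complex.mul_re, Complex.mul_im, hT]
  have him : (2 * Real.pi * Complex.I * w).im = 2 * Real.pi * w.re := by
    simp [Complex.mul_re, Complex.mul_im]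
  rw [Complex.sq_norm, Complex.normSq_apply, Complex.sub_re, Complex.sub_im,
    Complex.exp_re, Complex.exp_im, hre, him, Complex.one_re, Complex.one_im]
  have hc : Real.cos (2 * Real.pi * w.re) = 1 - 2 * Real.sin (Real.pi * w.re) ^ 2 := by
    rw [show (2:ℝ) * Real.pi * w.re = 2 * (Real.pi * w.re) from by ring,
      Real.cos_two_mul]
    have hs := Real.sin_sq_add_cos_sq (Real.pi * w.re)
    nlinarith
  have hs := Real.sin_sq_add_cos_sq (2 * Real.pi * w.re)
  nlinarith [Real.exp_pos t]

lemma main_small (w : ℂ) (hre : |w.re| ≤ 1 / 2) (him : |w.im| ≤ 1 / 2) :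
    ‖w‖ ≤ ‖Complex.exp (2 * Real.pi * Complex.I * w) - 1‖ := by
  have hpi := Real.pi_gt_three
  have ht : |(-(2 * Real.pi * w.im))| ≤ Real.pi := by
    rw [abs_neg, abs_mul, abs_of_pos (by positivity : (0:ℝ) < 2 * Real.pi)]
    nlinarith [abs_nonneg w.im]
  have hkey := key_ineq _ _ ht hre
  have heq := abs_exp_sub_one_sq w
  have hsq : ‖w‖ ^ 2 ≤
      ‖Complex.exp (2 * Real.pi * Complex.I * w) - 1‖ ^ 2 := by
    rw [heq, Complex.sq_norm, Complex.normSq_apply]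
    have h1 : (-(2 * Real.pi * w.im)) ^ 2 / (4 * Real.pi ^ 2) = w.im ^ 2 := by
      field_simp; ring
    rw [h1] at hkey
    nlinarith
  have h1 : (0:ℝ) ≤ ‖Complex.exp (2 * Real.pi * Complex.I * w) - 1‖ :=
    norm_nonneg _
  nlinarith [norm_nonneg w]

/-- For `z ∈ ℂ`: if `|Im z| > 1/2` then `|e^{2πiz} - 1| > 1/3`; if `|Im z| ≤ 1/2` then
`|e^{2πiz} - 1| ≥ d(z, ℤ)`, the distance from `z` to the integers. -/
theorem exp_two_pi_I_sub_one_lower_bound (z : ℂ) :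
    (1 / 2 < |z.im| →
      1 / 3 < ‖Complex.exp (2 * Real.pi * Complex.I * z) - 1‖) ∧
    (|z.im| ≤ 1 / 2 →
      Metric.infDist z intsC ≤
        ‖Complex.exp (2 * Real.pi * Complex.I * z) - 1‖) := by
  have hpi := Real.pi_gt_three
  constructor
  · intro him
    have habs : ‖Complex.exp (2 * Real.pi * Complex.I * z)‖ =
        Real.exp (-(2 * Real.pi * z.im)) := by
      rw [Complex.norm_exp]
      congr 1
      simp [Complex.mul_re, Complex.mul_im]
    have htri : |‖Complex.exp (2 * Real.pi * Complex.I * z)‖ - ‖(1:ℂ)‖|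
        ≤ ‖Complex.exp (2 * Real.pi * Complex.I * z) - 1‖ :=
      abs_norm_sub_norm_le _ _
    rw [habs, norm_one] at htri
    rcases abs_cases z.im with ⟨h, _⟩ | ⟨h, _⟩
    · -- z.im > 1/2 : exp(-2π im) < exp(-π) < 2/3
      have h1 : -(2 * Real.pi * z.im) < -Real.pi := by nlinarith
      have h2 : Real.exp (-(2 * Real.pi * z.im)) < Real.exp (-Real.pi) :=
        Real.exp_lt_exp.mpr h1
      have h3 : Real.exp (-Real.pi) < 2 / 3 := by
        have h4 : (3:ℝ)/2 < Real.exp 1 := by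
          have := Real.exp_one_gt_d9; linarith
        have h5 : Real.exp 1 ≤ Real.exp Real.pi := Real.exp_le_exp.mpr (by linarith)
        have hinv : Real.exp Real.pi * (Real.exp Real.pi)⁻¹ = 1 :=
          mul_inv_cancel₀ (Real.exp_pos _).ne'
        have hipos : (0:ℝ) < (Real.exp Real.pi)⁻¹ := by positivity
        rw [Real.exp_neg]
        nlinarith
      have h7 : Real.exp (-(2 * Real.pi * z.im)) < 2 / 3 := by linarith
      rcases abs_cases (Real.exp (-(2 * Real.pi * z.im)) - 1) with ⟨ha, _⟩ | ⟨ha, _⟩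
        <;> [skip; skip] <;> rw [ha] at htri <;> linarith
    · -- z.im < -1/2 : exp(-2π im) > exp(π) > 2
      have h1 : Real.pi < -(2 * Real.pi * z.im) := by nlinarith
      have h2 : Real.exp Real.pi < Real.exp (-(2 * Real.pi * z.im)) :=
        Real.exp_lt_exp.mpr h1
      have h3 : (2:ℝ) < Real.exp Real.pi := by
        have h4 : Real.exp 1 ≤ Real.exp Real.pi := Real.exp_le_exp.mpr (by linarith)
        have := Real.exp_one_gt_d9; linarith
      rcases abs_cases (Real.exp (-(2 * Real.pi * z.im)) - 1) with ⟨ha, _⟩ | ⟨ha, _⟩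
        <;> rw [ha] at htri <;> linarith
  · intro him
    set n : ℤ := round z.re with hn
    have hd : Metric.infDist z intsC ≤ ‖z - n‖ := by
      have hmem : ((n:ℂ)) ∈ intsC := ⟨n, rfl⟩
      calc Metric.infDist z intsC ≤ dist z (n:ℂ) := Metric.infDist_le_dist_of_mem hmem
        _ = ‖z - n‖ := Complex.dist_eq z n
    have hperiod : Complex.exp (2 * Real.pi * Complex.I * z) =
        Complex.exp (2 * Real.pi * Complex.I * (z - n)) := by
      rw [show 2 * Real.pi * Complex.I * z =
        2 * Real.pi * Complex.I * (z - n) + n * (2 * Real.pi * Complex.I) by ring,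
        Complex.exp_add, Complex.exp_int_mul_two_pi_mul_I, mul_one]
    rw [hperiod]
    refine hd.trans (main_small (z - n) ?_ ?_)
    · have : (z - (n:ℂ)).re = z.re - round z.re := by simp [hn]
      rw [this]
      exact abs_sub_round z.re
    · have : (z - (n:ℂ)).im = z.im := by simp
      rw [this]; exact him
end
end

section
/- For every z ∈ ℂ with |Re z| ≤ 1/2 and |Im z| ≤ 1/2, one has |e^{2πiz} − 1| ≥ |z|. -/
open Complex

private lemma aux_core (r s x y : ℝ) (hrpos : 0 < r) (hsin : 4 * x^2 ≤ s^2)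
    (hyb : y^2 ≤ (r - 1)^2) (hx2 : x^2 ≤ 1/4) (hy2 : y^2 ≤ 1/4) :
    x*x + y*y ≤ (r - 1)^2 + 4 * r * s^2 := by
  rcases le_or_gt (1/16 : ℝ) r with hcase | hcase
  · nlinarith [mul_le_mul_of_nonneg_left hsin (by linarith : (0:ℝ) ≤ 4*r),
      mul_nonneg (by linarith : (0:ℝ) ≤ r - 1/16) (sq_nonneg x)]
  · have hbig : (15/16:ℝ)^2 ≤ (1 - r)^2 := by
      nlinarith [mul_pos (by linarith : (0:ℝ) < 1/16 - r) (by linarith : (0:ℝ) < 31/16 - r)]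
    nlinarith [mul_nonneg (by linarith : (0:ℝ) ≤ 4*r) (sq_nonneg s)]

private lemma aux_real (x y : ℝ) (hre : |x| ≤ 1/2) (him : |y| ≤ 1/2) :
    x*x + y*y ≤ (Real.exp (-(2*Real.pi*y)) - 1)^2
      + 4 * Real.exp (-(2*Real.pi*y)) * Real.sin (Real.pi * x) ^ 2 := by
  obtain ⟨r, hr⟩ : ∃ r : ℝ, Real.exp (-(2*Real.pi*y)) = r := ⟨_, rfl⟩
  rw [hr]
  have hrpos : 0 < r := hr ▸ Real.exp_pos _
  have hpi : 3.14 ≤ Real.pi := by linarith [Real.pi_gt_d6]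
  have hsin : 4 * x^2 ≤ Real.sin (Real.pi * x) ^ 2 := by
    have key : ∀ t : ℝ, 0 ≤ t → t ≤ 1/2 → 2*t ≤ Real.sin (Real.pi * t) := by
      intro t ht ht'
      have := Real.mul_le_sin (x := Real.pi * t) (by positivity)
        (by nlinarith [Real.pi_pos])
      calc 2*t = 2/Real.pi * (Real.pi * t) := by field_simp
           _ ≤ Real.sin (Real.pi * t) := this
    rcases le_or_gt 0 x with hx | hx
    · have := key x hx (by linarith [abs_le.mp hre |>.2, le_abs_self x])
      nlinarith
    · have h2 := key (-x) (by linarith) (by have := abs_le.mp hre; linarith [neg_abs_le x])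
      have hsn : Real.sin (Real.pi * (-x)) = - Real.sin (Real.pi * x) := by
        rw [show Real.pi * (-x) = -(Real.pi*x) by ring, Real.sin_neg]
      rw [hsn] at h2
      nlinarith
  have hx2 : x^2 ≤ 1/4 := by nlinarith [abs_le.mp hre |>.1, abs_le.mp hre |>.2]
  have hy2 : y^2 ≤ 1/4 := by nlinarith [abs_le.mp him |>.1, abs_le.mp him |>.2]
  have hsinnn : 0 ≤ Real.sin (Real.pi * x) ^ 2 := sq_nonneg _
  have hyb : y^2 ≤ (r - 1)^2 := by
    rcases le_or_gt y 0 with hy | hy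
    · have h1' : -(2*Real.pi*y) + 1 ≤ r := hr ▸ Real.add_one_le_exp _
      have h4 : -y ≤ r - 1 := by nlinarith [mul_nonneg (by linarith : (0:ℝ) ≤ 2*Real.pi - 1) (by linarith : (0:ℝ) ≤ -y)]
      calc y^2 = (-y)^2 := by ring
        _ ≤ (r-1)^2 := pow_le_pow_left₀ (by linarith) h4 2
    · have h1' : (2*Real.pi*y) + 1 ≤ Real.exp (2*Real.pi*y) := Real.add_one_le_exp _
      have h2 : r * Real.exp (2*Real.pi*y) = 1 := by
        rw [← hr, ← Real.exp_add]; simp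
      have hepos : 0 < Real.exp (2*Real.pi*y) := Real.exp_pos _
      have h3 : r * (2*Real.pi*y + 1) ≤ 1 := by nlinarith
      have hq : (0:ℝ) < 1 + 2*Real.pi*y := by positivity
      have h5 : 2*Real.pi*y ≤ (1-r)*(1+2*Real.pi*y) := by nlinarith
      have hy' : y ≤ 1/2 := by nlinarith
      have h7 : (0:ℝ) ≤ 2*Real.pi - 1 - 2*Real.pi*y := by
        nlinarith [mul_nonneg (by linarith : (0:ℝ) ≤ Real.pi) (by linarith : (0:ℝ) ≤ 1/2 - y)]
      have h6 : y*(1+2*Real.pi*y) ≤ 2*Real.pi*y := by nlinarith [mul_nonneg hy.le h7]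
      have h4 : y ≤ 1 - r := le_of_mul_le_mul_right (h6.trans h5) hq
      calc y^2 ≤ (1-r)^2 := pow_le_pow_left₀ hy.le h4 2
        _ = (r-1)^2 := by ring
  exact aux_core r (Real.sin (Real.pi * x)) x y hrpos hsin hyb hx2 hy2

/-- For every `z ∈ ℂ` with `|Re z| ≤ 1/2` and `|Im z| ≤ 1/2`, one has
`|e^{2πiz} - 1| ≥ |z|`. -/
theorem abs_le_abs_exp_two_pi_I_sub_one (z : ℂ)
    (hre : |z.re| ≤ 1 / 2) (him : |z.im| ≤ 1 / 2) :
    ‖z‖ ≤ ‖Complex.exp (2 * Real.pi * Complex.I * z) - 1‖ := by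
  rw [Complex.norm_def, Complex.norm_def]
  apply Real.sqrt_le_sqrt
  have hw : (2 * (Real.pi:ℂ) * Complex.I * z)
      = Complex.mk (-(2*Real.pi*z.im)) (2*Real.pi*z.re) := by
    apply Complex.ext <;> simp [Complex.mul_re, Complex.mul_im] <;> ring
  rw [hw]
  have hre' : (Complex.exp (Complex.mk (-(2*Real.pi*z.im)) (2*Real.pi*z.re)) - 1).re
      = Real.exp (-(2*Real.pi*z.im)) * Real.cos (2*Real.pi*z.re) - 1 := by
    simp [Complex.exp_re]
  have him' : (Complex.exp (Complex.mk (-(2*Real.pi*z.im)) (2*Real.pi*z.re)) - 1).im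
      = Real.exp (-(2*Real.pi*z.im)) * Real.sin (2*Real.pi*z.re) := by
    simp [Complex.exp_im]
  rw [Complex.normSq_apply, Complex.normSq_apply, hre', him']
  have hc : Real.cos (2*Real.pi*z.re) = 1 - 2 * Real.sin (Real.pi * z.re) ^ 2 := by
    rw [show 2*Real.pi*z.re = 2*(Real.pi*z.re) by ring, Real.cos_two_mul, Real.cos_sq']
    ring
  have h1 := Real.sin_sq_add_cos_sq (2*Real.pi*z.re)
  have habs : (Real.exp (-(2*Real.pi*z.im)) * Real.cos (2*Real.pi*z.re) - 1)
        * (Real.exp (-(2*Real.pi*z.im)) * Real.cos (2*Real.pi*z.re) - 1)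
      + (Real.exp (-(2*Real.pi*z.im)) * Real.sin (2*Real.pi*z.re))
        * (Real.exp (-(2*Real.pi*z.im)) * Real.sin (2*Real.pi*z.re))
      = (Real.exp (-(2*Real.pi*z.im)) - 1)^2
        + 4 * Real.exp (-(2*Real.pi*z.im)) * Real.sin (Real.pi * z.re) ^ 2 := by
    linear_combination (Real.exp (-(2*Real.pi*z.im))^2) * h1
      - (2*Real.exp (-(2*Real.pi*z.im))) * hc
  rw [habs]
  exact aux_real z.re z.im hre him
end
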